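/- arXiv:1110.0745 — 6 statements merged into one kernel-verified Lean document; each statement's English description precedes it below -/
import Mathlib

section
/- Let T = k[y_1,...,y_n] with n > 1 and k an algebraically closed field of characteristic zero. Let J = (y_1, y_2^{a_2}, ..., y_n^{a_n}) with 2 ≤ a_2 ≤ ... ≤ a_n, and set τ = a_2 + ... + a_n - (n-1). Then the sum over i from a_2 to τ of the Hilbert function HF(T/J, i) equals (∏_{i=2}^n a_i) - binomial(a_2 + n - 2, n - 1). -/
open MvPolynomial

open Finset in
private lemma sum_univ_eq_degree' {m : ℕ} (d : Fin m →₀ ℕ) : ∑ x, d x = d.degree :=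
  (Finset.sum_subset (Finset.subset_univ _) (by intro x _ hx; simpa using hx)).symm

open Finset in
private lemma mem_finsuppAntidiag_univ' {m i : ℕ} {d : Fin m →₀ ℕ} :
    d ∈ Finset.finsuppAntidiag (Finset.univ : Finset (Fin m)) i ↔ d.degree = i := by
  rw [Finset.mem_finsuppAntidiag]
  constructor
  · rintro ⟨h, -⟩; rw [← h, sum_univ_eq_degree']
  · intro h; exact ⟨by rw [sum_univ_eq_degree', h], Finset.subset_univ _⟩

private lemma degree_eq_fsum' {m : ℕ} (d : Fin m →₀ ℕ) : d.degree = d.sum fun _ => id := rfl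

private lemma card_finsuppAntidiag_univ' (m i : ℕ) :
    (Finset.finsuppAntidiag (Finset.univ : Finset (Fin m)) i).card = (m + i - 1).choose i := by
  have h1 : Fintype.card (Sym (Fin m) i) = (m + i - 1).choose i := by
    simpa using Sym.card_sym_eq_choose (α := Fin m) i
  rw [← h1, ← Fintype.card_coe]
  apply Fintype.card_congr
  refine Equiv.trans ?_ (Sym.equivNatSum (Fin m) i).symm
  apply Equiv.subtypeEquivRight
  intro d
  rw [mem_finsuppAntidiag_univ', degree_eq_fsum']

private lemma degree_embDomain' {α β : Type*} (f : α ↪ β) (d : α →₀ ℕ) :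
    (Finsupp.embDomain f d).degree = d.degree := by
  rw [Finsupp.degree_apply, Finsupp.degree_apply, Finsupp.support_embDomain, Finset.sum_map]
  exact Finset.sum_congr rfl fun x _ => Finsupp.embDomain_apply_self f d x

private lemma mem_finsuppAntidiag_erase' {m i : ℕ} {d : Fin (m+1) →₀ ℕ} :
    d ∈ Finset.finsuppAntidiag ((Finset.univ : Finset (Fin (m+1))).erase 0) i ↔
      d.degree = i ∧ d 0 = 0 := by
  rw [Finset.mem_finsuppAntidiag]
  have hsupp : (d.support ⊆ (Finset.univ : Finset (Fin (m+1))).erase 0) ↔ d 0 = 0 := by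
    constructor
    · intro h
      by_contra h0
      have := h (Finsupp.mem_support_iff.2 h0)
      simp at this
    · intro h0 x hx
      rw [Finset.mem_erase]
      refine ⟨?_, Finset.mem_univ _⟩
      rintro rfl
      exact Finsupp.mem_support_iff.1 hx h0
  constructor
  · rintro ⟨hsum, hs⟩
    refine ⟨?_, hsupp.1 hs⟩
    rw [← hsum, Finsupp.degree_apply, Finset.sum_subset hs]
    intro x _ hx; simpa using hx
  · rintro ⟨hdeg, h0⟩
    have hs := hsupp.2 h0
    exact ⟨by rw [← Finset.sum_subset hs (by intro x _ hx; simpa using hx), ← Finsupp.degree_apply,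
      hdeg], hs⟩

private lemma card_finsuppAntidiag_erase' (m i : ℕ) :
    (Finset.finsuppAntidiag ((Finset.univ : Finset (Fin (m+1))).erase 0) i).card
      = (m + i - 1).choose i := by
  rw [← card_finsuppAntidiag_univ' m i]
  symm
  apply Finset.card_bij
    (fun d _ => Finsupp.embDomain (Fin.succEmb m) d)
    (fun d hd => by
      rw [mem_finsuppAntidiag_univ'] at hd
      rw [mem_finsuppAntidiag_erase']
      refine ⟨by rw [degree_embDomain']; exact hd, ?_⟩
      apply Finsupp.embDomain_notin_range
      simp [Fin.succ_ne_zero])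
  · intro d hd e he h
    exact Finsupp.embDomain_injective _ h
  · intro d hd
    rw [mem_finsuppAntidiag_erase'] at hd
    have hrange : ↑d.support ⊆ Set.range (Fin.succEmb m) := by
      intro x hx
      have hx0 : x ≠ 0 := by
        rintro rfl
        exact Finsupp.mem_support_iff.1 hx hd.2
      exact ⟨x.pred hx0, by simp⟩
    refine ⟨Finsupp.comapDomain _ d ((Fin.succEmb m).injective.injOn), ?_, ?_⟩
    · rw [mem_finsuppAntidiag_univ']
      have h2 := degree_embDomain' (Fin.succEmb m)
        (Finsupp.comapDomain _ d ((Fin.succEmb m).injective.injOn))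
      rw [Finsupp.embDomain_comapDomain (f := Fin.succEmb m) (g := d) hrange] at h2
      rw [← h2, hd.1]
    · exact (Finsupp.embDomain_comapDomain (f := Fin.succEmb m) (g := d) hrange)

section Ideal

variable {k : Type*} [Field k] {n : ℕ}

private lemma support_mem_P' (a : Fin (n+1) → ℕ) (p : MvPolynomial (Fin (n+1)) k)
    (hp : p ∈ Ideal.span ({X 0} ∪ {q | ∃ i : Fin (n+1), i ≠ 0 ∧ q = X i ^ a i} :
      Set (MvPolynomial (Fin (n+1)) k))) :
    ∀ d ∈ p.support, 0 < d 0 ∨ ∃ j, j ≠ 0 ∧ a j ≤ d j := by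
  classical
  refine Submodule.span_induction ?_ ?_ ?_ ?_ hp
  · rintro x (rfl | ⟨j, hj, rfl⟩)
    · intro d hd
      rw [MvPolynomial.support_X] at hd
      simp only [Finset.mem_singleton] at hd
      subst hd
      left; simp
    · intro d hd
      rw [MvPolynomial.support_X_pow] at hd
      simp only [Finset.mem_singleton] at hd
      subst hd
      right
      exact ⟨j, hj, by simp⟩
  · simp
  · intro x y _ _ hx hy d hd
    rcases Finset.mem_union.1 (MvPolynomial.support_add hd) with h | h
    · exact hx d h
    · exact hy d h
  · intro r x _ hx d hd
    have : d ∈ (r * x).support := by simpa [smul_eq_mul] using hd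
    rcases Finset.mem_add.1 (MvPolynomial.support_mul r x this) with ⟨u, hu, v, hv, rfl⟩
    rcases hx v hv with h | ⟨j, hj, hle⟩
    · left; simp only [Finsupp.add_apply]; omega
    · right; exact ⟨j, hj, le_trans hle (by simp)⟩

private lemma monomial_mem_J' (a : Fin (n+1) → ℕ) (d : Fin (n+1) →₀ ℕ)
    (hd : 0 < d 0 ∨ ∃ j, j ≠ 0 ∧ a j ≤ d j) :
    (monomial d (1:k)) ∈ Ideal.span ({X 0} ∪ {q | ∃ i : Fin (n+1), i ≠ 0 ∧ q = X i ^ a i} :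
      Set (MvPolynomial (Fin (n+1)) k)) := by
  rcases hd with h | ⟨j, hj, h⟩
  · have hle : Finsupp.single (0 : Fin (n+1)) 1 ≤ d := Finsupp.single_le_iff.2 h
    have : (monomial d (1:k)) = (monomial (d - Finsupp.single 0 1) (1:k)) * X 0 := by
      rw [X, monomial_mul, mul_one, tsub_add_cancel_of_le hle]
    rw [this]
    exact Ideal.mul_mem_left _ _ (Ideal.subset_span (Or.inl rfl))
  · have hle : Finsupp.single j (a j) ≤ d := Finsupp.single_le_iff.2 h
    have : (monomial d (1:k)) = (monomial (d - Finsupp.single j (a j)) (1:k)) * X j ^ a j := by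
      rw [X_pow_eq_monomial, monomial_mul, mul_one, tsub_add_cancel_of_le hle]
    rw [this]
    exact Ideal.mul_mem_left _ _ (Ideal.subset_span (Or.inr ⟨j, hj, rfl⟩))

private lemma inter_eq_supported' (a : Fin (n+1) → ℕ) (i : ℕ) :
    homogeneousSubmodule (Fin (n+1)) k i ⊓
      Submodule.restrictScalars k (Ideal.span
        ({X 0} ∪ {q | ∃ i : Fin (n+1), i ≠ 0 ∧ q = X i ^ a i} :
          Set (MvPolynomial (Fin (n+1)) k)))
      = AddMonoidAlgebra.supported k k
          {d | d.degree = i ∧ (0 < d 0 ∨ ∃ j, j ≠ 0 ∧ a j ≤ d j)} := by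
  apply le_antisymm
  · rintro p ⟨hh, hJ⟩
    rw [AddMonoidAlgebra.mem_supported]
    intro d hd
    rw [Finset.mem_coe] at hd
    refine ⟨?_, support_mem_P' a p hJ d hd⟩
    have hh' : p.IsHomogeneous i := hh
    rw [Finsupp.degree_eq_weight_one]
    exact hh' (Finsupp.mem_support_iff.1 hd)
  · rw [AddMonoidAlgebra.supported_eq_span_single, Submodule.span_le]
    rintro _ ⟨d, ⟨hdeg, hP⟩, rfl⟩
    rw [SetLike.mem_coe, Submodule.mem_inf]
    dsimp only
    constructor
    · rw [mem_homogeneousSubmodule, single_eq_monomial]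
      exact isHomogeneous_monomial _ hdeg
    · rw [Submodule.restrictScalars_mem, single_eq_monomial]
      exact monomial_mem_J' a d hP

private lemma finrank_supported' {m : ℕ} (s : Finset (Fin m →₀ ℕ)) :
    Module.finrank k
      (AddMonoidAlgebra.supported k k (↑s : Set (Fin m →₀ ℕ)) : Submodule k (MvPolynomial (Fin m) k))
      = s.card := by
  classical
  refine Eq.trans (LinearEquiv.finrank_eq
    ((AddMonoidAlgebra.supportedEquivFinsupp (S := k) (R := k) (↑s : Set (Fin m →₀ ℕ))).trans
      (Finsupp.linearEquivFunOnFinite k k _))) ?_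
  rw [Module.finrank_pi]
  simp

end Ideal

/-- The Hilbert function of `T/I` in degree `i`. -/
noncomputable def HF {n : ℕ} {k : Type*} [Field k]
    (I : Ideal (MvPolynomial (Fin n) k)) (i : ℕ) : ℕ :=
  Module.finrank k (homogeneousSubmodule (Fin n) k i) -
    Module.finrank k
      ↥(homogeneousSubmodule (Fin n) k i ⊓ Submodule.restrictScalars k I)

theorem hilbert_sum_for_J {k : Type*} [Field k] [IsAlgClosed k] [CharZero k]
    {n : ℕ} (hn : 0 < n) (a : Fin (n + 1) → ℕ) (hmono : Monotone a)
    (ha : ∀ i : Fin (n + 1), i ≠ 0 → 2 ≤ a i)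
    (J : Ideal (MvPolynomial (Fin (n + 1)) k))
    (hJ : J = Ideal.span
      ({X 0} ∪ {p | ∃ i : Fin (n + 1), i ≠ 0 ∧ p = X i ^ a i}))
    (τ : ℕ) (hτ : τ = (∑ i ∈ Finset.univ.erase 0, a i) - n) :
    ∑ i ∈ Finset.Icc (a 1) τ, HF J i =
      (∏ i ∈ Finset.univ.erase 0, a i) - Nat.choose (a 1 + n - 1) n := by
  classical
  subst hJ hτ
  set τ : ℕ := (∑ i ∈ Finset.univ.erase 0, a i) - n with hτ
  -- basic facts about Fin (n+1)
  have h10 : (1 : Fin (n+1)) ≠ 0 := by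
    intro h
    have := congrArg Fin.val h
    rw [Fin.val_one'] at this
    rw [Nat.mod_eq_of_lt (by omega)] at this
    simp at this
  have hle1 : ∀ j : Fin (n+1), j ≠ 0 → a 1 ≤ a j := by
    intro j hj
    apply hmono
    rw [Fin.le_def, Fin.val_one', Nat.mod_eq_of_lt (by omega)]
    have : j.val ≠ 0 := fun h => hj (Fin.ext h)
    omega
  -- notation
  set P : (Fin (n+1) →₀ ℕ) → Prop := fun d => 0 < d 0 ∨ ∃ j, j ≠ 0 ∧ a j ≤ d j with hPdef
  set A : ℕ → Finset (Fin (n+1) →₀ ℕ) :=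
    fun i => Finset.finsuppAntidiag (Finset.univ : Finset (Fin (n+1))) i with hAdef
  set G : ℕ → Finset (Fin (n+1) →₀ ℕ) := fun i => (A i).filter (fun d => ¬ P d) with hGdef
  -- Hilbert function computation
  have hHF : ∀ i, HF (Ideal.span
      ({X 0} ∪ {p | ∃ i : Fin (n + 1), i ≠ 0 ∧ p = X i ^ a i} :
        Set (MvPolynomial (Fin (n+1)) k))) i = (G i).card := by
    intro i
    have hset1 : {d : Fin (n+1) →₀ ℕ | d.degree = i} = ↑(A i) := by
      ext d
      simp only [Set.mem_setOf_eq, Finset.mem_coe, hAdef, mem_finsuppAntidiag_univ']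
    have hset2 : {d : Fin (n+1) →₀ ℕ | d.degree = i ∧ (0 < d 0 ∨ ∃ j, j ≠ 0 ∧ a j ≤ d j)}
        = ↑((A i).filter (fun d => P d)) := by
      ext d
      simp only [Set.mem_setOf_eq, Finset.mem_coe, Finset.mem_filter, hAdef, hPdef,
        mem_finsuppAntidiag_univ']
    have hr1 : Module.finrank k ↥(homogeneousSubmodule (Fin (n+1)) k i) = (A i).card := by
      rw [homogeneousSubmodule_eq_finsupp_supported, hset1]
      exact finrank_supported' _
    have hr2 : Module.finrank k
        ↥(homogeneousSubmodule (Fin (n+1)) k i ⊓ Submodule.restrictScalars k (Ideal.span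
          ({X 0} ∪ {p | ∃ i : Fin (n + 1), i ≠ 0 ∧ p = X i ^ a i} :
            Set (MvPolynomial (Fin (n+1)) k))))
        = ((A i).filter (fun d => P d)).card := by
      rw [inter_eq_supported' a i, hset2]
      exact finrank_supported' _
    unfold HF
    rw [hr1, hr2]
    have hunion : ((A i).filter (fun d => P d)).card + ((A i).filter (fun d => ¬ P d)).card
        = (A i).card := Finset.card_filter_add_card_filter_not (fun d => P d)
    simp only [hGdef]
    omega
  -- membership in G
  have hGmem : ∀ (i : ℕ) (d : Fin (n+1) →₀ ℕ),
      d ∈ G i ↔ d.degree = i ∧ d 0 = 0 ∧ ∀ j, j ≠ 0 → d j < a j := by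
    intro i d
    rw [hGdef]
    simp only [Finset.mem_filter, hAdef, mem_finsuppAntidiag_univ', hPdef]
    rw [not_or, not_exists]
    constructor
    · rintro ⟨h1, h2, h3⟩
      refine ⟨h1, by omega, fun j hj => ?_⟩
      have := h3 j
      rw [not_and] at this
      have := this hj
      omega
    · rintro ⟨h1, h2, h3⟩
      refine ⟨h1, by omega, fun j => ?_⟩
      rw [not_and]
      intro hj
      have := h3 j hj
      omega
  -- the finset of all bounded exponents
  set b : Fin (n+1) → ℕ := fun j => if j = 0 then 1 else a j with hbdef
  set E : Finset (Fin (n+1) →₀ ℕ) :=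
    (Fintype.piFinset (fun j => Finset.range (b j))).image
      ⇑(Finsupp.equivFunOnFinite.symm) with hEdef
  have hEmem : ∀ d : Fin (n+1) →₀ ℕ, d ∈ E ↔ ∀ j, d j < b j := by
    intro d
    rw [hEdef, Finset.mem_image]
    constructor
    · rintro ⟨f, hf, rfl⟩
      intro j
      rw [Fintype.mem_piFinset] at hf
      have := hf j
      rw [Finset.mem_range] at this
      simpa using this
    · intro h
      refine ⟨Finsupp.equivFunOnFinite d, ?_, by simp⟩
      rw [Fintype.mem_piFinset]
      intro j
      rw [Finset.mem_range]
      simpa using h j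
  have hEcard : E.card = ∏ i ∈ Finset.univ.erase 0, a i := by
    rw [hEdef, Finset.card_image_of_injective _ (Equiv.injective _), Fintype.card_piFinset]
    simp only [Finset.card_range]
    rw [← Finset.mul_prod_erase Finset.univ b (Finset.mem_univ 0)]
    have hb0 : b 0 = 1 := by simp [hbdef]
    rw [hb0, one_mul]
    exact Finset.prod_congr rfl fun j hj => by
      simp [hbdef, (Finset.mem_erase.1 hj).1]
  -- fibers of E by degree
  have hfiber : ∀ i, G i = E.filter (fun d => d.degree = i) := by
    intro i
    ext d
    rw [hGmem, Finset.mem_filter, hEmem]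
    constructor
    · rintro ⟨h1, h2, h3⟩
      refine ⟨fun j => ?_, h1⟩
      simp only [hbdef]
      by_cases hj : j = 0
      · subst hj; simp [h2]
      · rw [if_neg hj]; exact h3 j hj
    · rintro ⟨h1, h2⟩
      refine ⟨h2, ?_, fun j hj => ?_⟩
      · have := h1 0
        simp only [hbdef] at this
        simp at this
        omega
      · have := h1 j
        simp only [hbdef] at this
        rw [if_neg hj] at this
        exact this
  -- degree of elements of E is at most τ
  have hdegE : ∀ d ∈ E, d.degree ∈ Finset.Icc 0 τ := by
    intro d hd
    rw [hEmem] at hd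
    rw [Finset.mem_Icc]
    refine ⟨Nat.zero_le _, ?_⟩
    have h1 : d.degree = ∑ j, d j := (sum_univ_eq_degree' d).symm
    have h2 : ∑ j, d j ≤ ∑ j, (b j - 1) := by
      apply Finset.sum_le_sum
      intro j _
      have := hd j
      omega
    have h3 : ∑ j, (b j - 1) = ∑ j ∈ Finset.univ.erase 0, (a j - 1) := by
      rw [← Finset.add_sum_erase Finset.univ (fun j => b j - 1) (Finset.mem_univ 0)]
      have hb0 : b 0 - 1 = 0 := by simp [hbdef]
      rw [hb0, zero_add]
      exact Finset.sum_congr rfl fun j hj => by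
        simp [hbdef, (Finset.mem_erase.1 hj).1]
    have h4 : ∑ j ∈ (Finset.univ : Finset (Fin (n+1))).erase 0, (a j - 1)
        = (∑ j ∈ (Finset.univ : Finset (Fin (n+1))).erase 0, a j)
          - ∑ _j ∈ (Finset.univ : Finset (Fin (n+1))).erase 0, 1 := by
      apply Finset.sum_tsub_distrib
      intro j hj
      have := ha j (Finset.mem_erase.1 hj).1
      omega
    have h5 : ∑ _j ∈ (Finset.univ : Finset (Fin (n+1))).erase 0, (1:ℕ) = n := by
      rw [Finset.sum_const, smul_eq_mul, mul_one,
        Finset.card_erase_of_mem (Finset.mem_univ 0), Finset.card_univ, Fintype.card_fin]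
      omega
    rw [hτ]
    omega
  -- total sum
  have htotal : ∑ i ∈ Finset.Icc 0 τ, (G i).card = E.card := by
    have := Finset.card_eq_sum_card_fiberwise hdegE
    rw [this]
    apply Finset.sum_congr rfl
    intro i _
    rw [hfiber i]
  -- low degrees
  have hlow_eq : ∀ i, i < a 1 →
      G i = Finset.finsuppAntidiag ((Finset.univ : Finset (Fin (n+1))).erase 0) i := by
    intro i hi
    ext d
    rw [hGmem, mem_finsuppAntidiag_erase']
    constructor
    · rintro ⟨h1, h2, _⟩; exact ⟨h1, h2⟩
    · rintro ⟨h1, h2⟩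
      refine ⟨h1, h2, fun j hj => ?_⟩
      have hdj : d j ≤ d.degree := Finsupp.le_degree j d
      have := hle1 j hj
      omega
  have hlow : ∑ i ∈ Finset.range (a 1), (G i).card = (a 1 + n - 1).choose n := by
    have h1 : ∑ i ∈ Finset.range (a 1), (G i).card
        = ∑ i ∈ Finset.range (a 1), (n + i - 1).choose i := by
      apply Finset.sum_congr rfl
      intro i hi
      rw [Finset.mem_range] at hi
      rw [hlow_eq i hi, card_finsuppAntidiag_erase']
    have h2 : ∀ i : ℕ, (n + i - 1).choose i = ((n-1) + i).choose (n-1) := by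
      intro i
      have e1 : n + i - 1 = (n-1) + i := by omega
      rw [e1]
      have := Nat.choose_symm (n := (n-1)+i) (k := n-1) (by omega)
      have e2 : (n-1) + i - (n-1) = i := by omega
      rw [e2] at this
      exact this
    have h3 : ∑ i ∈ Finset.Icc (n-1) ((n-1) + a 1 - 1), Nat.choose i (n-1)
        = ((n-1) + a 1 - 1 + 1).choose n := by
      have := Nat.sum_Icc_choose ((n-1) + a 1 - 1) (n-1)
      rw [this]
      congr 1
      omega
    have h4 : ∑ i ∈ Finset.Icc (n-1) ((n-1) + a 1 - 1), Nat.choose i (n-1)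
        = ∑ i ∈ Finset.range (a 1), ((n-1) + i).choose (n-1) := by
      rw [← Finset.Ico_add_one_right_eq_Icc, Finset.sum_Ico_eq_sum_range]
      have e : (n-1) + a 1 - 1 + 1 - (n-1) = a 1 := by
        have := ha 1 h10
        omega
      rw [e]
    rw [h1]
    calc ∑ i ∈ Finset.range (a 1), (n + i - 1).choose i
        = ∑ i ∈ Finset.range (a 1), ((n-1) + i).choose (n-1) := by
          exact Finset.sum_congr rfl fun i _ => h2 i
      _ = ((n-1) + a 1 - 1 + 1).choose n := by rw [← h4, h3]
      _ = (a 1 + n - 1).choose n := by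
          congr 1
          have := ha 1 h10
          omega
  -- a 1 ≤ τ + 1
  have h1mem : (1 : Fin (n+1)) ∈ (Finset.univ : Finset (Fin (n+1))).erase 0 :=
    Finset.mem_erase.2 ⟨h10, Finset.mem_univ _⟩
  have hsum_ge : a 1 + 2 * (n - 1) ≤ ∑ i ∈ Finset.univ.erase 0, a i := by
    have hcard : (((Finset.univ : Finset (Fin (n+1))).erase 0).erase 1).card = n - 1 := by
      rw [Finset.card_erase_of_mem h1mem, Finset.card_erase_of_mem (Finset.mem_univ 0),
        Finset.card_univ, Fintype.card_fin]
      omega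
    have h2le : ∀ j ∈ ((Finset.univ : Finset (Fin (n+1))).erase 0).erase 1, 2 ≤ a j := by
      intro j hj
      exact ha j (Finset.mem_erase.1 (Finset.mem_erase.1 hj).2).1
    have hb : 2 * (n - 1) ≤ ∑ i ∈ ((Finset.univ : Finset (Fin (n+1))).erase 0).erase 1, a i := by
      have := Finset.card_nsmul_le_sum _ a 2 h2le
      rw [hcard] at this
      simpa [mul_comm] using this
    have hsp : a 1 + ∑ i ∈ ((Finset.univ : Finset (Fin (n+1))).erase 0).erase 1, a i
        = ∑ i ∈ Finset.univ.erase 0, a i := Finset.add_sum_erase _ a h1mem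
    omega
  have ha1τ : a 1 ≤ τ + 1 := by
    rw [hτ]
    have := ha 1 h10
    omega
  -- split the sum
  have hsplit : (∑ i ∈ Finset.Ico 0 (a 1), (G i).card)
      + ∑ i ∈ Finset.Ico (a 1) (τ+1), (G i).card
      = ∑ i ∈ Finset.Ico 0 (τ+1), (G i).card :=
    Finset.sum_Ico_consecutive _ (Nat.zero_le _) ha1τ
  have e1 : Finset.Icc (a 1) τ = Finset.Ico (a 1) (τ+1) := by
    rw [Finset.Ico_add_one_right_eq_Icc]
  have e2 : Finset.Icc 0 τ = Finset.Ico 0 (τ+1) := by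
    rw [Finset.Ico_add_one_right_eq_Icc]
  have e3 : Finset.range (a 1) = Finset.Ico 0 (a 1) := by rw [Finset.range_eq_Ico]
  rw [Finset.sum_congr rfl (fun i _ => hHF i), e1]
  rw [e2] at htotal
  rw [e3] at hlow
  -- choose ≤ product needed? conclude by omega
  rw [hEcard] at htotal
  omega
end

section
/- Let n > 1 and 0 ≤ b_2 ≤ ... ≤ b_n be integers. The ideal I = (y_2^{b_2+1} − y_1^{b_2+1}, y_3^{b_3+1} − y_1^{b_3+1}, ..., y_n^{b_n+1} − y_1^{b_n+1}) ⊂ k[y_1,...,y_n] is the radical homogeneous ideal of a set of ∏_{i=2}^n (b_i+1) distinct points in P^{n-1}, namely the points [1 : ε(2) : ... : ε(n)] where each ε(i) ranges over the (b_i+1)-th roots of unity. -/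
open MvPolynomial

/-- A multivariate polynomial vanishing on a product grid with degrees smaller
than the grid sizes is zero. -/
lemma mv_grid_eq_zero {R : Type*} [CommRing R] [IsDomain R] :
    ∀ (m : ℕ) (p : MvPolynomial (Fin m) R) (S : Fin m → Finset R),
    (∀ i, degreeOf i p < (S i).card) →
    (∀ x : Fin m → R, (∀ i, x i ∈ S i) → eval x p = 0) → p = 0 := by
  intro m
  induction m with
  | zero =>
    intro p S hdeg hz
    have h := hz isEmptyElim (fun i => i.elim0)
    rw [p.eq_C_of_isEmpty, eval_C] at h
    rw [p.eq_C_of_isEmpty, h, map_zero]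
  | succ m ih =>
    intro p S hdeg hz
    have key : ∀ j : ℕ, (finSuccEquiv R m p).coeff j = 0 := by
      intro j
      apply ih _ (fun i => S i.succ)
      · intro i
        exact lt_of_le_of_lt (degreeOf_coeff_finSuccEquiv p i j) (hdeg i.succ)
      · intro x hx
        have hw : Polynomial.map (eval x) (finSuccEquiv R m p) = 0 := by
          apply Polynomial.eq_zero_of_natDegree_lt_card_of_eval_eq_zero' _ (S 0)
          · intro y hy
            rw [← eval_eq_eval_mv_eval']
            apply hz
            intro i
            refine Fin.cases ?_ ?_ i
            · simpa using hy
            · intro j; simpa using hx j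
          · calc (Polynomial.map (eval x) (finSuccEquiv R m p)).natDegree
                ≤ (finSuccEquiv R m p).natDegree := Polynomial.natDegree_map_le
              _ = degreeOf 0 p := natDegree_finSuccEquiv p
              _ < (S 0).card := hdeg 0
        have := congrArg (fun q => Polynomial.coeff q j) hw
        simpa using this
    have h0 : finSuccEquiv R m p = 0 := Polynomial.ext fun j => by simp [key j]
    have := (map_eq_zero_iff (finSuccEquiv R m) (finSuccEquiv R m).injective).mp h0
    exact this
lemma eval_aeval_line {R : Type*} [CommRing R] {σ : Type*} (ε : σ → R) (t : R)
    (p : MvPolynomial σ R) :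
    Polynomial.eval t (aeval (fun i => Polynomial.C (ε i) * Polynomial.X) p)
      = eval (fun i => ε i * t) p := by
  rw [aeval_def]
  rw [show Polynomial.eval t (eval₂ (algebraMap R (Polynomial R))
      (fun i => Polynomial.C (ε i) * Polynomial.X) p)
    = (Polynomial.evalRingHom t) (eval₂ (algebraMap R (Polynomial R))
      (fun i => Polynomial.C (ε i) * Polynomial.X) p) from rfl]
  rw [eval₂_comp_left (Polynomial.evalRingHom t)]
  rw [MvPolynomial.eval]
  congr 1
  · ext c
    simp [Polynomial.algebraMap_apply]
  · funext i
    simp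

lemma degreeOf_monomial_le {R : Type*} [CommSemiring R] {σ : Type*} (d : σ →₀ ℕ) (c : R)
    (i : σ) : degreeOf i (monomial d c) ≤ d i := by
  classical
  by_cases hc : c = 0
  · simp [hc]
  · rw [degreeOf_monomial_eq d i hc]


lemma reduction {k : Type*} [CommRing k] {n : ℕ} (b : Fin (n + 1) → ℕ)
    (p : MvPolynomial (Fin (n + 1)) k) :
    ∃ q r : MvPolynomial (Fin (n + 1)) k,
      q ∈ Ideal.span {g | ∃ i : Fin (n + 1), i ≠ 0 ∧
          g = X i ^ (b i + 1) - X 0 ^ (b i + 1)} ∧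
      (∀ i : Fin (n + 1), i ≠ 0 → degreeOf i r ≤ b i) ∧ p = q + r := by
  classical
  set I := Ideal.span {g : MvPolynomial (Fin (n + 1)) k | ∃ i : Fin (n + 1), i ≠ 0 ∧
      g = X i ^ (b i + 1) - X 0 ^ (b i + 1)} with hIdef
  have hmono : ∀ (N : ℕ) (d : Fin (n + 1) →₀ ℕ) (c : k),
      (∑ i ∈ Finset.univ.erase 0, d i) ≤ N →
      ∃ q r : MvPolynomial (Fin (n + 1)) k, q ∈ I ∧
        (∀ i : Fin (n + 1), i ≠ 0 → degreeOf i r ≤ b i) ∧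
        (monomial d c : MvPolynomial (Fin (n + 1)) k) = q + r := by
    intro N
    induction N with
    | zero =>
      intro d c hN
      refine ⟨0, monomial d c, zero_mem _, ?_, (zero_add _).symm⟩
      intro i hi
      have hd : d i = 0 := by
        have := Finset.sum_eq_zero_iff.mp (Nat.le_zero.mp hN) i
          (Finset.mem_erase.mpr ⟨hi, Finset.mem_univ i⟩)
        exact this
      exact le_trans (degreeOf_monomial_le d c i) (by omega)
    | succ N ih =>
      intro d c hN
      by_cases hbd : ∀ i : Fin (n + 1), i ≠ 0 → d i ≤ b i
      · refine ⟨0, monomial d c, zero_mem _, ?_, (zero_add _).symm⟩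
        intro i hi
        exact le_trans (degreeOf_monomial_le d c i) (hbd i hi)
      · push_neg at hbd
        obtain ⟨i, hi0, hib⟩ := hbd
        have hib' : b i + 1 ≤ d i := hib
        set m := b i + 1 with hm
        have hle : Finsupp.single i m ≤ d := Finsupp.single_le_iff.mpr hib'
        set d' := d - Finsupp.single i m with hd'
        have hd : d' + Finsupp.single i m = d := tsub_add_cancel_of_le hle
        have hkey : (monomial d c : MvPolynomial (Fin (n + 1)) k)
            = monomial d' c * X i ^ m := by
          rw [X_pow_eq_monomial, monomial_mul, mul_one, hd]
        -- sum bookkeeping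
        have hsum : (∑ j ∈ Finset.univ.erase 0, d' j) + m ≤ N + 1 := by
          have h1 : ∀ j, d j = d' j + (Finsupp.single i m) j := fun j => by
            rw [← hd]; rfl
          have h2 : (∑ j ∈ Finset.univ.erase 0, d j)
              = (∑ j ∈ Finset.univ.erase 0, d' j)
                + (∑ j ∈ Finset.univ.erase 0, (Finsupp.single i m) j) := by
            rw [← Finset.sum_add_distrib]
            exact Finset.sum_congr rfl fun j _ => h1 j
          have h3 : (∑ j ∈ Finset.univ.erase 0, (Finsupp.single i m) j) = m := by
            rw [Finset.sum_eq_single_of_mem i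
              (Finset.mem_erase.mpr ⟨hi0, Finset.mem_univ i⟩)]
            · exact Finsupp.single_eq_same
            · intro j _ hj
              exact Finsupp.single_eq_of_ne hj
          omega
        have hsum2 : (∑ j ∈ Finset.univ.erase 0, (d' + Finsupp.single (0 : Fin (n + 1)) m) j) ≤ N := by
          have h4 : (∑ j ∈ Finset.univ.erase 0, (d' + Finsupp.single (0 : Fin (n + 1)) m) j)
              = ∑ j ∈ Finset.univ.erase 0, d' j := by
            refine Finset.sum_congr rfl fun j hj => ?_
            have hj0 : j ≠ 0 := Finset.ne_of_mem_erase hj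
            rw [Finsupp.add_apply, Finsupp.single_eq_of_ne hj0, add_zero]
          omega
        obtain ⟨q', r', hq', hr', heq'⟩ := ih (d' + Finsupp.single (0 : Fin (n + 1)) m) c hsum2
        refine ⟨monomial d' c * (X i ^ m - X 0 ^ m) + q', r', ?_, hr', ?_⟩
        · exact add_mem (Ideal.mul_mem_left _ _
            (Ideal.subset_span ⟨i, hi0, by rw [hm]⟩)) hq'
        · have h5 : (monomial d' c : MvPolynomial (Fin (n + 1)) k) * X 0 ^ m
              = monomial (d' + Finsupp.single (0 : Fin (n + 1)) m) c := by
            rw [X_pow_eq_monomial, monomial_mul, mul_one]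
          rw [hkey, add_assoc, ← heq', ← h5]
          ring
  refine MvPolynomial.induction_on' p (fun d c => hmono _ d c le_rfl) ?_
  rintro p q ⟨qp, rp, hqp, hrp, hep⟩ ⟨qq, rq, hqq, hrq, heq⟩
  exact ⟨qp + qq, rp + rq, add_mem hqp hqq,
    fun i hi => le_trans (degreeOf_add_le i rp rq) (max_le (hrp i hi) (hrq i hi)),
    by rw [hep, heq]; ring⟩

lemma exists_prim_root' (k : Type*) [Field k] [IsAlgClosed k] [CharZero k] (m : ℕ)
    (hm : 0 < m) : ∃ ζ : k, IsPrimitiveRoot ζ m := by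
  obtain ⟨ζ, hζ⟩ := IsCyclotomicExtension.exists_isPrimitiveRoot
    (S := {m}) k k (Set.mem_singleton _) hm.ne'
  exact ⟨ζ, by exact_mod_cast hζ⟩

lemma mem_span_of_forall_aeval {k : Type*} [Field k] [IsAlgClosed k] [CharZero k] {n : ℕ}
    (b : Fin (n + 1) → ℕ) (p : MvPolynomial (Fin (n + 1)) k)
    (hp : ∀ ε : Fin (n + 1) → k, ε 0 = 1 → (∀ i : Fin (n + 1), i ≠ 0 → ε i ^ (b i + 1) = 1) →
      aeval (fun i => Polynomial.C (ε i) * Polynomial.X) p = 0) :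
    p ∈ Ideal.span {g | ∃ i : Fin (n + 1), i ≠ 0 ∧
        g = X i ^ (b i + 1) - X 0 ^ (b i + 1)} := by
  classical
  obtain ⟨q, r, hq, hrdeg, rfl⟩ := reduction b p
  have hqker : ∀ ε : Fin (n + 1) → k, ε 0 = 1 →
      (∀ i : Fin (n + 1), i ≠ 0 → ε i ^ (b i + 1) = 1) →
      aeval (fun i => Polynomial.C (ε i) * Polynomial.X) q = 0 := by
    intro ε h1 h2
    have hle : Ideal.span {g : MvPolynomial (Fin (n + 1)) k | ∃ i : Fin (n + 1), i ≠ 0 ∧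
        g = X i ^ (b i + 1) - X 0 ^ (b i + 1)}
        ≤ RingHom.ker (aeval (R := k)
          (fun i => Polynomial.C (ε i) * Polynomial.X : Fin (n + 1) → Polynomial k)) := by
      rw [Ideal.span_le]
      rintro g ⟨i, hi, rfl⟩
      have : (aeval (R := k)
          (fun i => Polynomial.C (ε i) * Polynomial.X : Fin (n + 1) → Polynomial k))
          (X i ^ (b i + 1) - X 0 ^ (b i + 1)) = 0 := by
        simp [mul_pow, ← Polynomial.C_pow, h2 i hi, h1]
      simpa [RingHom.mem_ker] using this
    exact RingHom.mem_ker.mp (hle hq)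
  have hr : ∀ ε : Fin (n + 1) → k, ε 0 = 1 →
      (∀ i : Fin (n + 1), i ≠ 0 → ε i ^ (b i + 1) = 1) →
      aeval (fun i => Polynomial.C (ε i) * Polynomial.X) r = 0 := by
    intro ε h1 h2
    have := hp ε h1 h2
    rwa [map_add, hqker ε h1 h2, zero_add] at this
  suffices hr0 : r = 0 by
    rw [hr0, add_zero]; exact hq
  -- evaluation on lines
  have hev : ∀ (ε : Fin (n + 1) → k), ε 0 = 1 →
      (∀ i : Fin (n + 1), i ≠ 0 → ε i ^ (b i + 1) = 1) →
      ∀ t : k, eval (fun i => ε i * t) r = 0 := by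
    intro ε h1 h2 t
    rw [← eval_aeval_line, hr ε h1 h2, Polynomial.eval_zero]
  set Q := finSuccEquiv k n r with hQ
  have key : ∀ x0 : k, x0 ≠ 0 → Polynomial.eval (MvPolynomial.C x0) Q = 0 := by
    intro x0 hx0
    apply mv_grid_eq_zero n _
      (fun i => (Polynomial.nthRootsFinset (b i.succ + 1) (1 : k)).image (· * x0))
    · intro i
      obtain ⟨ζ, hζ⟩ := exists_prim_root' k (b i.succ + 1) (Nat.succ_pos _)
      rw [Finset.card_image_of_injective _ (mul_left_injective₀ hx0),
        hζ.card_nthRootsFinset]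
      -- degree bound
      have hdeg' : degreeOf i (Polynomial.eval (MvPolynomial.C x0) Q)
          ≤ degreeOf i.succ r := by
        rw [Polynomial.eval_eq_sum_range]
        refine le_trans (degreeOf_sum_le _ _ _) ?_
        refine Finset.sup_le fun j _ => ?_
        refine le_trans (degreeOf_mul_le _ _ _) ?_
        have h1 : degreeOf i ((MvPolynomial.C x0 : MvPolynomial (Fin n) k) ^ j) = 0 := by
          rw [← map_pow, degreeOf_C]
        rw [h1, add_zero]
        exact degreeOf_coeff_finSuccEquiv r i j
      exact lt_of_le_of_lt (le_trans hdeg' (hrdeg i.succ (Fin.succ_ne_zero i)))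
        (Nat.lt_succ_self _)
    · intro y hy
      have hcast : eval y (Polynomial.eval (MvPolynomial.C x0) Q)
          = Polynomial.eval x0 (Polynomial.map (eval y) Q) := by
        rw [Polynomial.eval, Polynomial.hom_eval₂, Polynomial.eval_map]
        simp [Polynomial.eval₂]
      rw [hcast, ← eval_eq_eval_mv_eval']
      set ε : Fin (n + 1) → k := Fin.cons 1 (fun j => y j / x0) with hε
      have hfun : (fun i => ε i * x0) = Fin.cons x0 y := by
        funext i
        refine Fin.cases ?_ ?_ i
        · simp [hε]
        · intro j
          simp only [hε, Fin.cons_succ]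
          exact div_mul_cancel₀ (y j) hx0
      rw [← hfun]
      apply hev ε (by simp [hε])
      intro i hi
      obtain ⟨j, rfl⟩ := Fin.exists_succ_eq_of_ne_zero hi
      obtain ⟨ζ, hζmem, hζ⟩ := Finset.mem_image.mp (hy j)
      have hζ1 : ζ ^ (b (Fin.succ j) + 1) = 1 :=
        (Polynomial.mem_nthRootsFinset (Nat.succ_pos _) (1 : k)).mp hζmem
      simp only [hε, Fin.cons_succ]
      rw [← hζ, mul_div_assoc, div_self hx0, mul_one, hζ1]
  have hQ0 : Q = 0 := by
    apply Polynomial.eq_zero_of_infinite_isRoot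
    apply Set.Infinite.mono
      (s := (fun x0 : k => (MvPolynomial.C x0 : MvPolynomial (Fin n) k)) '' {x : k | x ≠ 0})
    · rintro _ ⟨x0, hx0, rfl⟩
      exact key x0 hx0
    · exact Set.Infinite.image
        (Set.injOn_of_injective (MvPolynomial.C_injective (Fin n) k))
        (Set.Finite.infinite_compl (Set.finite_singleton 0))
  have : r = 0 := by
    have := congrArg (finSuccEquiv k n).symm hQ0
    rwa [hQ, AlgEquiv.symm_apply_apply, map_zero] at this
  exact this

lemma aeval_eq_zero_of_mem_span {k : Type*} [CommRing k] {n : ℕ} (b : Fin (n + 1) → ℕ)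
    (ε : Fin (n + 1) → k) (h1 : ε 0 = 1)
    (h2 : ∀ i : Fin (n + 1), i ≠ 0 → ε i ^ (b i + 1) = 1)
    {q : MvPolynomial (Fin (n + 1)) k}
    (hq : q ∈ Ideal.span {g | ∃ i : Fin (n + 1), i ≠ 0 ∧
        g = X i ^ (b i + 1) - X 0 ^ (b i + 1)}) :
    aeval (fun i => Polynomial.C (ε i) * Polynomial.X) q = 0 := by
  have hle : Ideal.span {g : MvPolynomial (Fin (n + 1)) k | ∃ i : Fin (n + 1), i ≠ 0 ∧
      g = X i ^ (b i + 1) - X 0 ^ (b i + 1)}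
      ≤ RingHom.ker (aeval (R := k)
        (fun i => Polynomial.C (ε i) * Polynomial.X : Fin (n + 1) → Polynomial k)) := by
    rw [Ideal.span_le]
    rintro g ⟨i, hi, rfl⟩
    have : (aeval (R := k)
        (fun i => Polynomial.C (ε i) * Polynomial.X : Fin (n + 1) → Polynomial k))
        (X i ^ (b i + 1) - X 0 ^ (b i + 1)) = 0 := by
      simp [mul_pow, ← Polynomial.C_pow, h2 i hi, h1]
    simpa [RingHom.mem_ker] using this
  exact RingHom.mem_ker.mp (hle hq)


theorem ideal_of_roots_of_unity_points {k : Type*} [Field k] [IsAlgClosed k] [CharZero k]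
    {n : ℕ} (hn : 0 < n) (b : Fin (n + 1) → ℕ) (hmono : Monotone b)
    (I : Ideal (MvPolynomial (Fin (n + 1)) k))
    (hI : I = Ideal.span
      {p | ∃ i : Fin (n + 1), i ≠ 0 ∧
        p = X i ^ (b i + 1) - X 0 ^ (b i + 1)}) :
    I.IsRadical ∧
      (I = ⨅ ε : {ε : Fin (n + 1) → k //
          ε 0 = 1 ∧ ∀ i : Fin (n + 1), i ≠ 0 → (ε i) ^ (b i + 1) = 1},
        Ideal.span {p | ∃ i : Fin (n + 1), i ≠ 0 ∧
          p = X i - C ((ε : Fin (n + 1) → k) i) * X 0}) ∧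
      Set.ncard {ε : Fin (n + 1) → k |
          ε 0 = 1 ∧ ∀ i : Fin (n + 1), i ≠ 0 → (ε i) ^ (b i + 1) = 1} =
        ∏ i ∈ Finset.univ.erase 0, (b i + 1) := by
  classical
  subst hI
  refine ⟨?_, ?_, ?_⟩
  · -- radical
    intro x hx
    obtain ⟨N, hxN⟩ := hx
    apply mem_span_of_forall_aeval b x
    intro ε h1 h2
    have hev : (aeval (fun i => Polynomial.C (ε i) * Polynomial.X) x : Polynomial k) ^ N
        = 0 := by
      have := aeval_eq_zero_of_mem_span b ε h1 h2 hxN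
      rwa [map_pow] at this
    have hker : x ^ N ∈ RingHom.ker (aeval (R := k)
        (fun i => Polynomial.C (ε i) * Polynomial.X : Fin (n + 1) → Polynomial k)) := by
      rw [RingHom.mem_ker, map_pow]
      exact hev
    have := (RingHom.ker_isPrime _).mem_of_pow_mem N hker
    exact RingHom.mem_ker.mp this
  · -- equality with intersection
    refine le_antisymm (le_iInf fun ε => ?_) ?_
    · rw [Ideal.span_le]
      rintro g ⟨i, hi, rfl⟩
      have hdvd : (X i - C (ε.1 i) * X 0 : MvPolynomial (Fin (n + 1)) k)
          ∣ X i ^ (b i + 1) - X 0 ^ (b i + 1) := by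
        have h := sub_dvd_pow_sub_pow (X i : MvPolynomial (Fin (n + 1)) k)
          (C (ε.1 i) * X 0) (b i + 1)
        rwa [mul_pow, ← C_pow, ε.2.2 i hi, C_1, one_mul] at h
      obtain ⟨c, hc⟩ := hdvd
      rw [SetLike.mem_coe, hc]
      exact Ideal.mul_mem_right _ _ (Ideal.subset_span ⟨i, hi, rfl⟩)
    · intro x hx
      apply mem_span_of_forall_aeval b x
      intro ε h1 h2
      have hxJ : x ∈ Ideal.span {p : MvPolynomial (Fin (n + 1)) k | ∃ i : Fin (n + 1),
          i ≠ 0 ∧ p = X i - C (ε i) * X 0} := by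
        have := (Submodule.mem_iInf _).mp hx ⟨ε, h1, h2⟩
        exact this
      have hJK : Ideal.span {p : MvPolynomial (Fin (n + 1)) k | ∃ i : Fin (n + 1),
          i ≠ 0 ∧ p = X i - C (ε i) * X 0}
          ≤ RingHom.ker (aeval (R := k)
            (fun i => Polynomial.C (ε i) * Polynomial.X : Fin (n + 1) → Polynomial k)) := by
        rw [Ideal.span_le]
        rintro g ⟨i, hi, rfl⟩
        have : (aeval (R := k)
            (fun i => Polynomial.C (ε i) * Polynomial.X : Fin (n + 1) → Polynomial k))
            (X i - C (ε i) * X 0) = 0 := by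
          simp [h1]
        simpa [RingHom.mem_ker] using this
      exact RingHom.mem_ker.mp (hJK hxJ)
  · -- cardinality
    have hset : {ε : Fin (n + 1) → k | ε 0 = 1 ∧
          ∀ i : Fin (n + 1), i ≠ 0 → ε i ^ (b i + 1) = 1}
        = Set.pi Set.univ (fun i => if i = 0 then ({1} : Set k)
            else {x : k | x ^ (b i + 1) = 1}) := by
      ext ε
      simp only [Set.mem_setOf_eq, Set.mem_pi, Set.mem_univ, forall_const]
      constructor
      · rintro ⟨h1, h2⟩ i
        by_cases hi : i = 0
        · subst hi; simp [h1]
        · rw [if_neg hi]; exact h2 i hi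
      · intro h
        refine ⟨by simpa using h 0, fun i hi => ?_⟩
        have := h i
        rwa [if_neg hi] at this
    have hcard : ∀ i : Fin (n + 1), i ≠ 0 →
        Nat.card {x : k | x ^ (b i + 1) = 1} = b i + 1 := by
      intro i hi
      obtain ⟨ζ, hζ⟩ := exists_prim_root' k (b i + 1) (Nat.succ_pos _)
      have hEq : {x : k | x ^ (b i + 1) = 1}
          = ↑(Polynomial.nthRootsFinset (b i + 1) (1 : k)) := by
        ext x
        simp [Polynomial.mem_nthRootsFinset (Nat.succ_pos _)]
      rw [hEq, Nat.card_coe_set_eq, Set.ncard_coe_finset, hζ.card_nthRootsFinset]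
    rw [hset, ← Nat.card_coe_set_eq, Nat.card_congr (Equiv.Set.univPi _), Nat.card_pi]
    rw [← Finset.mul_prod_erase Finset.univ _ (Finset.mem_univ (0 : Fin (n + 1)))]
    rw [if_pos rfl]
    have h1 : Nat.card ({1} : Set k) = 1 := by
      rw [Nat.card_coe_set_eq, Set.ncard_singleton]
    rw [h1, one_mul]
    refine Finset.prod_congr rfl fun i hi => ?_
    rw [if_neg (Finset.ne_of_mem_erase hi), hcard i (Finset.ne_of_mem_erase hi)]
end

section
/- Let L_1,...,L_n be linearly independent linear forms in k[x_1,...,x_n] and 1 ≤ b_1 ≤ ... ≤ b_n. Then the Waring rank of F = L_1^{b_1}···L_n^{b_n} equals ∏_{i=2}^n (b_i + 1). -/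
open MvPolynomial Finset

lemma prod_X_pow_univ {σ R : Type*} [CommSemiring R] [Fintype σ] [DecidableEq σ] (a : σ → ℕ) :
    (∏ i, X i ^ a i : MvPolynomial σ R)
      = monomial (Finsupp.equivFunOnFinite.symm a) 1 := by
  rw [← prod_X_pow_eq_monomial]
  refine (Finset.prod_subset (Finset.subset_univ (Finsupp.equivFunOnFinite.symm a).support)
    fun x _ hx => ?_).symm
  simp only [Finsupp.mem_support_iff, ne_eq, not_not] at hx
  rw [show a x = 0 from hx, pow_zero]

lemma wr_expand {σ R : Type*} [CommSemiring R] [Fintype σ] [DecidableEq σ] (w : σ → R) (d : ℕ) :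
    (∑ i, C (w i) * X i : MvPolynomial σ R) ^ d
      = ∑ a ∈ piAntidiag univ d,
          C ((Nat.multinomial univ a : R) * ∏ i, w i ^ a i)
            * monomial (Finsupp.equivFunOnFinite.symm a) 1 := by
  rw [Finset.sum_pow_eq_sum_piAntidiag univ _ d]
  refine Finset.sum_congr rfl fun a _ => ?_
  rw [← prod_X_pow_univ]
  simp only [mul_pow, C_pow, Finset.prod_mul_distrib, map_mul, map_prod, map_natCast, C_pow]
  ring

lemma coeff_wr_expand {σ R : Type*} [CommSemiring R] [Fintype σ] [DecidableEq σ] (w : σ → R)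
    (d : ℕ) (a : σ → ℕ) (ha : ∑ i, a i = d) :
    coeff (Finsupp.equivFunOnFinite.symm a) ((∑ i, C (w i) * X i : MvPolynomial σ R) ^ d)
      = (Nat.multinomial univ a : R) * ∏ i, w i ^ a i := by
  rw [wr_expand, coeff_sum, Finset.sum_eq_single a]
  · rw [coeff_C_mul, coeff_monomial, if_pos rfl, mul_one]
  · intro m _ hm
    simp only [coeff_C_mul, coeff_monomial]
    rw [if_neg, mul_zero]
    exact fun h => hm (Finsupp.equivFunOnFinite.symm.injective h)
  · intro h
    exact absurd (by simpa using ha) (by simpa using h)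

lemma single_of_degree_one {σ : Type*} (m : σ →₀ ℕ) (h : Finsupp.degree m = 1) :
    ∃ j, m = Finsupp.single j 1 := by
  classical
  have hcard : m.support.card ≤ 1 := by
    have h2 : m.support.card • 1 ≤ Finsupp.degree m :=
      Finset.card_nsmul_le_sum m.support m 1 (fun x hx => Finsupp.mem_support_iff.mp hx
        |> Nat.one_le_iff_ne_zero.mpr)
    simp only [smul_eq_mul, mul_one] at h2
    omega
  rcases Nat.le_one_iff_eq_zero_or_eq_one.mp hcard with h' | h'
  · exact absurd (by simp [Finsupp.degree_apply, Finset.card_eq_zero.mp h'] : Finsupp.degree m = 0)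
      (by omega)
  · obtain ⟨i, hi⟩ := Finset.card_eq_one.mp h'
    refine ⟨i, ?_⟩
    rw [Finsupp.eq_single_iff]
    exact ⟨by rw [hi], by rwa [Finsupp.degree_apply, hi, Finset.sum_singleton] at h⟩

lemma hom1_rep {σ R : Type*} [CommSemiring R] [Fintype σ] [DecidableEq σ]
    {P : MvPolynomial σ R} (h : P.IsHomogeneous 1) :
    P = ∑ j, C (coeff (Finsupp.single j 1) P) * X j := by
  ext m
  rw [coeff_sum]
  by_cases hm : ∃ j, m = Finsupp.single j 1
  · obtain ⟨j₀, rfl⟩ := hm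
    rw [Finset.sum_eq_single j₀]
    · simp [coeff_C_mul, coeff_X']
    · intro j _ hj
      rw [coeff_C_mul, coeff_X', if_neg, mul_zero]
      exact fun hs => hj (by
        have := Finsupp.single_left_injective (one_ne_zero (α := ℕ)) hs; exact this)
    · simp
  · have h1 : coeff m P = 0 := by
      by_contra hc
      have hw := h hc
      replace hw : Finsupp.degree m = 1 := by rw [Finsupp.degree_eq_weight_one]; exact hw
      exact hm (single_of_degree_one m hw)
    rw [h1]
    symm
    refine Finset.sum_eq_zero fun j _ => ?_
    rw [coeff_C_mul, coeff_X', if_neg (fun hs => hm ⟨j, hs.symm⟩), mul_zero]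

lemma wr_lower_bound {k : Type*} [Field k] {n s : ℕ} (b : Fin (n+1) → ℕ) (hb0 : 1 ≤ b 0)
    (p : Fin s → Fin (n+1) → k) (κ : k) (hκ : κ ≠ 0)
    (hM : ∀ a : Fin (n+1) → ℕ, (∑ i, a i) = (∑ i, b i) →
      (∑ j, ∏ i, p j i ^ a i) = if a = b then κ else 0) :
    ∏ i : Fin n, (b i.succ + 1) ≤ s := by
  classical
  set b' : Fin n → ℕ := fun i => b i.succ with hb'
  set q : Fin s → Fin n → k := fun j i => p j i.succ / p j 0 with hq
  have hcle : ∀ c : (∀ i : Fin n, Fin (b' i + 1)), ∀ i, (c i : ℕ) ≤ b' i :=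
    fun c i => Nat.lt_succ_iff.mp (c i).isLt
  -- Step 1: the "kill top coefficients" lemma
  have kill : ∀ e, e ≤ ∑ i, b' i → ∀ lam : (∀ i : Fin n, Fin (b' i + 1)) → k,
      (∀ c, e < ∑ i, (c i : ℕ) → lam c = 0) →
      (∀ j, p j 0 ≠ 0 → ∑ c, lam c * ∏ i, q j i ^ (c i : ℕ) = 0) →
      ∀ c₀, (∑ i, (c₀ i : ℕ)) = e → lam c₀ = 0 := by
    intro e he lam hsupp hvan c₀ hc₀
    set a : (∀ i : Fin n, Fin (b' i + 1)) → Fin (n+1) → ℕ :=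
      fun c => Fin.cons (b 0 + (e - ∑ i, (c i : ℕ)))
        (fun i => (b' i - (c₀ i : ℕ)) + (c i : ℕ)) with ha
    have hsum : ∀ c : (∀ i : Fin n, Fin (b' i + 1)), (∑ i, (c i :ℕ)) ≤ e →
        (∑ i', a c i') = ∑ i', b i' := by
      intro c hc
      rw [Fin.sum_univ_succ, Fin.sum_univ_succ (f := b)]
      simp only [ha, Fin.cons_zero, Fin.cons_succ]
      rw [Finset.sum_add_distrib]
      have h1 : (∑ i, ((b' i) - (c₀ i : ℕ))) + e = ∑ i, b' i := by
        rw [← hc₀, ← Finset.sum_add_distrib]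
        exact Finset.sum_congr rfl fun i _ => by have := hcle c₀ i; omega
      have h2 : ∑ i : Fin n, b i.succ = ∑ i, b' i := rfl
      omega
    have key : ∑ c, lam c * (∑ j, ∏ i', p j i' ^ (a c i')) = lam c₀ * κ := by
      have hac₀ : a c₀ = b := by
        funext i'
        refine Fin.cases ?_ (fun i => ?_) i'
        · simp only [ha, Fin.cons_zero, hc₀]; omega
        · simp only [ha, Fin.cons_succ]
          have := hcle c₀ i
          have h2 : b' i = b i.succ := rfl
          omega
      rw [Finset.sum_eq_single c₀]
      · rw [hM _ (hsum c₀ (le_of_eq hc₀)), if_pos hac₀]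
      · intro c _ hc
        by_cases hdeg : (∑ i, (c i : ℕ)) ≤ e
        · rw [hM _ (hsum c hdeg), if_neg, mul_zero]
          intro hab
          apply hc
          funext i
          have h2 := congrFun hab i.succ
          simp only [ha, Fin.cons_succ] at h2
          have h3 : b' i = b i.succ := rfl
          exact Fin.ext (by have := hcle c₀ i; omega)
        · rw [hsupp c (by omega), zero_mul]
      · intro h; exact absurd (Finset.mem_univ c₀) h
    have key2 : ∑ c, lam c * (∑ j, ∏ i', p j i' ^ (a c i')) = 0 := by
      simp_rw [Finset.mul_sum]
      rw [Finset.sum_comm]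
      refine Finset.sum_eq_zero fun j _ => ?_
      by_cases hj : p j 0 = 0
      · refine Finset.sum_eq_zero fun c _ => ?_
        rw [Fin.prod_univ_succ]
        simp only [ha, Fin.cons_zero]
        rw [hj, zero_pow (by omega), zero_mul, mul_zero]
      · have hfac : ∀ c : (∀ i : Fin n, Fin (b' i + 1)),
            lam c * ∏ i', p j i' ^ (a c i')
              = (p j 0 ^ (b 0 + e) * ∏ i, p j i.succ ^ (b' i - (c₀ i : ℕ)))
                * (lam c * ∏ i, q j i ^ (c i : ℕ)) := by
          intro c
          by_cases hl : lam c = 0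
          · rw [hl]; ring
          · have hdeg : (∑ i, (c i : ℕ)) ≤ e := by
              by_contra hgt; exact hl (hsupp c (by omega))
            rw [Fin.prod_univ_succ]
            simp only [ha, Fin.cons_zero, Fin.cons_succ]
            have hp' : ∀ i : Fin n, p j i.succ = q j i * p j 0 := fun i => by
              rw [hq]; field_simp
            have hprod : ∏ i, p j i.succ ^ ((b' i - (c₀ i : ℕ)) + (c i : ℕ))
                = (∏ i, p j i.succ ^ (b' i - (c₀ i : ℕ)))
                  * ((∏ i, q j i ^ (c i : ℕ)) * p j 0 ^ (∑ i, (c i : ℕ))) := by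
              simp_rw [pow_add]
              rw [Finset.prod_mul_distrib]
              congr 1
              calc ∏ i, p j i.succ ^ (c i : ℕ)
                  = ∏ i, (q j i ^ (c i : ℕ) * p j 0 ^ (c i : ℕ)) := by
                    refine Finset.prod_congr rfl fun i _ => ?_
                    rw [hp' i, mul_pow]
                _ = (∏ i, q j i ^ (c i : ℕ)) * p j 0 ^ (∑ i, (c i : ℕ)) := by
                    rw [Finset.prod_mul_distrib, Finset.prod_pow_eq_pow_sum]
            rw [hprod]
            have hpow : p j 0 ^ (b 0 + (e - ∑ i, (c i : ℕ))) * p j 0 ^ (∑ i, (c i : ℕ))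
                = p j 0 ^ (b 0 + e) := by
              rw [← pow_add]
              congr 1
              omega
            linear_combination (lam c * (∏ i, p j i.succ ^ (b' i - (c₀ i : ℕ)))
              * (∏ i, q j i ^ (c i : ℕ))) * hpow
        calc ∑ c, lam c * ∏ i', p j i' ^ (a c i')
            = (p j 0 ^ (b 0 + e) * ∏ i, p j i.succ ^ (b' i - (c₀ i : ℕ)))
              * ∑ c, lam c * ∏ i, q j i ^ (c i : ℕ) := by
              rw [Finset.mul_sum]
              exact Finset.sum_congr rfl fun c _ => hfac c
          _ = 0 := by rw [hvan j hj, mul_zero]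
    have := key.symm.trans key2
    exact (mul_eq_zero.mp this).resolve_right hκ
  -- Step 2: induction to get full linear independence
  have hdegle : ∀ c : (∀ i : Fin n, Fin (b' i + 1)), (∑ i, (c i : ℕ)) ≤ ∑ i, b' i :=
    fun c => Finset.sum_le_sum fun i _ => hcle c i
  have indep : ∀ e : ℕ, ∀ lam : (∀ i : Fin n, Fin (b' i + 1)) → k,
      (∀ c, e < ∑ i, (c i : ℕ) → lam c = 0) →
      (∀ j, p j 0 ≠ 0 → ∑ c, lam c * ∏ i, q j i ^ (c i : ℕ) = 0) →
      ∀ c, lam c = 0 := by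
    intro e
    induction e with
    | zero =>
      intro lam hsupp hvan c
      by_cases hc : ∑ i, (c i : ℕ) = 0
      · exact kill 0 (Nat.zero_le _) lam hsupp hvan c hc
      · exact hsupp c (by omega)
    | succ e ih =>
      intro lam hsupp hvan c
      by_cases hle : e + 1 ≤ ∑ i, b' i
      · have hkill : ∀ c', (∑ i, (c' i : ℕ)) = e + 1 → lam c' = 0 :=
          fun c' h => kill (e+1) hle lam hsupp hvan c' h
        refine ih lam (fun c' h => ?_) hvan c
        by_cases h' : (∑ i, (c' i : ℕ)) = e + 1
        · exact hkill c' h'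
        · exact hsupp c' (by omega)
      · refine ih lam (fun c' h => ?_) hvan c
        exact absurd h (by have := hdegle c'; omega)
  -- Step 3: conclude by linear independence
  have hli : LinearIndependent k
      (fun c : (∀ i : Fin n, Fin (b' i + 1)) =>
        fun j : {j : Fin s // p j 0 ≠ 0} => ∏ i, q j.1 i ^ (c i : ℕ)) := by
    rw [Fintype.linearIndependent_iff]
    intro g hg
    refine indep (∑ i, b' i) g (fun c' h => absurd h (by have := hdegle c'; omega)) ?_
    intro j hj
    have := congrFun hg ⟨j, hj⟩
    simpa [Finset.sum_apply] using this
  have hcard := hli.fintype_card_le_finrank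
  rw [Module.finrank_pi] at hcard
  calc ∏ i : Fin n, (b i.succ + 1)
      = Fintype.card (∀ i : Fin n, Fin (b' i + 1)) := by
        rw [Fintype.card_pi]
        exact (Finset.prod_congr rfl fun i _ => (Fintype.card_fin _).symm)
    _ ≤ Fintype.card {j : Fin s // p j 0 ≠ 0} := hcard
    _ ≤ Fintype.card (Fin s) := Fintype.card_subtype_le _
    _ = s := Fintype.card_fin s

lemma geom_root_sum_one {k : Type*} [Field k] (M : ℕ) :
    ∑ x : Fin M, (1 : k) ^ (x : ℕ) = (M : k) := by simp

lemma geom_root_sum_zero {k : Type*} [Field k] (M : ℕ) (u : k) (hu : u ^ M = 1)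
    (h : u ≠ 1) : ∑ x : Fin M, u ^ (x : ℕ) = 0 := by
  rw [Fin.sum_univ_eq_sum_range]
  have h2 := geom_sum_mul u M
  rw [hu, sub_self] at h2
  rcases mul_eq_zero.mp h2 with h3 | h3
  · exact h3
  · exact absurd (by linear_combination h3 : u = 1) h

-- the combinatorial step
lemma modeq_forces_eq {n : ℕ} (b : Fin (n+1) → ℕ) (hmono : Monotone b)
    (a : Fin (n+1) → ℕ) (hsum : ∑ i, a i = ∑ i, b i)
    (hmod : ∀ i : Fin n, a i.succ ≡ b i.succ [MOD b i.succ + 1]) : a = b := by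
  have hge : ∀ i : Fin n, b i.succ ≤ a i.succ := by
    intro i
    by_contra hlt
    have h1 := (hmod i).symm
    have h2 : b i.succ % (b i.succ + 1) = b i.succ := Nat.mod_eq_of_lt (by omega)
    have h3 : a i.succ % (b i.succ + 1) = a i.succ := Nat.mod_eq_of_lt (by omega)
    unfold Nat.ModEq at h1
    omega
  -- show each a i.succ = b i.succ
  have heq : ∀ i : Fin n, a i.succ = b i.succ := by
    intro i
    by_contra hne
    have hgt : b i.succ + (b i.succ + 1) ≤ a i.succ := by
      have hdvd : ((b i.succ + 1 : ℕ) : ℤ) ∣ (a i.succ : ℤ) - (b i.succ : ℤ) := by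
        have := (hmod i).symm.dvd
        exact_mod_cast this
      have hle := Int.le_of_dvd (by have := hge i; omega) hdvd
      omega
    -- excess too big
    have hsumle : ∑ j : Fin n, b j.succ + (b i.succ + 1) ≤ ∑ j : Fin n, a j.succ := by
      have hpt : ∀ j : Fin n, b j.succ + (if j = i then b i.succ + 1 else 0) ≤ a j.succ := by
        intro j
        by_cases hji : j = i
        · subst hji; simpa using hgt
        · simpa [hji] using hge j
      have := Finset.sum_le_sum (fun j (_ : j ∈ univ) => hpt j)
      rwa [Finset.sum_add_distrib, Finset.sum_ite_eq' univ i, if_pos (Finset.mem_univ i)]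
        at this
    have hs1 : ∑ i', a i' = a 0 + ∑ i : Fin n, a i.succ := Fin.sum_univ_succ a
    have hs2 : ∑ i', b i' = b 0 + ∑ i : Fin n, b i.succ := Fin.sum_univ_succ b
    have hb0 : b 0 ≤ b i.succ := hmono (Fin.zero_le i.succ)
    omega
  funext i'
  refine Fin.cases ?_ heq i'
  have hs1 : ∑ i', a i' = a 0 + ∑ i : Fin n, a i.succ := Fin.sum_univ_succ a
  have hs2 : ∑ i', b i' = b 0 + ∑ i : Fin n, b i.succ := Fin.sum_univ_succ b
  have : ∑ i : Fin n, a i.succ = ∑ i : Fin n, b i.succ :=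
    Finset.sum_congr rfl fun i _ => heq i
  omega

lemma wr_upper_bound {k : Type*} [Field k] [IsAlgClosed k] [CharZero k] {n : ℕ}
    (b : Fin (n+1) → ℕ) (hmono : Monotone b) (hb0 : 1 ≤ b 0) :
    ∃ Lf : Fin (∏ i : Fin n, (b i.succ + 1)) → MvPolynomial (Fin (n+1)) k,
      (∀ t, (Lf t).IsHomogeneous 1) ∧
        (∏ i, X i ^ b i : MvPolynomial (Fin (n+1)) k) = ∑ t, Lf t ^ (∑ i, b i) := by
  classical
  set d := ∑ i, b i with hd
  have hdpos : 0 < d := by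
    rw [hd, Fin.sum_univ_succ]; omega
  have hzeta : ∀ i : Fin n, ∃ z : k, IsPrimitiveRoot z (b i.succ + 1) := by
    intro i
    haveI : NeZero ((b i.succ + 1 : ℕ) : k) := ⟨Nat.cast_ne_zero.mpr (by omega)⟩
    exact HasEnoughRootsOfUnity.exists_primitiveRoot k _
  choose ζ hζ using hzeta
  have hζne : ∀ i, ζ i ≠ 0 := fun i => (hζ i).ne_zero (by omega)
  set w : (∀ i : Fin n, Fin (b i.succ + 1)) → Fin (n+1) → k :=
    fun t => Fin.cons 1 (fun i => ζ i ^ (t i : ℕ)) with hw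
  set γ : (∀ i : Fin n, Fin (b i.succ + 1)) → k :=
    fun t => ∏ i, ((ζ i ^ b i.succ)⁻¹) ^ (t i : ℕ) with hγ
  set N := ∏ i : Fin n, (b i.succ + 1) with hN
  set K : k := (N : k) * (Nat.multinomial univ b : k) with hK
  have hNpos : 0 < N := Finset.prod_pos fun i _ => by omega
  have hKne : K ≠ 0 := by
    rw [hK]
    exact mul_ne_zero (Nat.cast_ne_zero.mpr hNpos.ne')
      (Nat.cast_ne_zero.mpr (Nat.multinomial_pos _ _).ne')
  -- character sums
  have hchar : ∀ a : Fin (n+1) → ℕ, (∑ i, a i = d) →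
      (∑ t, γ t * ∏ i', w t i' ^ a i') = if a = b then (N : k) else 0 := by
    intro a hsum
    have hstep : ∀ t, γ t * ∏ i', w t i' ^ a i'
        = ∏ i, (ζ i ^ a i.succ * (ζ i ^ b i.succ)⁻¹) ^ (t i : ℕ) := by
      intro t
      rw [hγ, hw, Fin.prod_univ_succ]
      simp only [Fin.cons_zero, Fin.cons_succ, one_pow, one_mul]
      simp only [mul_pow]
      rw [Finset.prod_mul_distrib, mul_comm]
      congr 1
      refine Finset.prod_congr rfl fun i _ => ?_
      rw [← pow_mul, ← pow_mul, Nat.mul_comm]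
    rw [Finset.sum_congr rfl fun t _ => hstep t]
    rw [← Fintype.prod_sum (fun i (x : Fin (b i.succ + 1)) =>
      (ζ i ^ a i.succ * (ζ i ^ b i.succ)⁻¹) ^ (x : ℕ))]
    by_cases hab : a = b
    · subst hab
      rw [if_pos rfl]
      simp only [mul_inv_cancel₀ (pow_ne_zero _ (hζne _)), one_pow]
      rw [hN]
      push_cast
      exact Finset.prod_congr rfl fun i _ => by
        rw [Finset.sum_const, Finset.card_univ, Fintype.card_fin, nsmul_eq_mul, mul_one]
        push_cast; ring
    · rw [if_neg hab]
      have hnot : ¬ (∀ i : Fin n, ζ i ^ a i.succ * (ζ i ^ b i.succ)⁻¹ = 1) := by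
        intro hall
        apply hab
        refine modeq_forces_eq b hmono a (by rw [hsum, hd]) fun i => ?_
        have h1 : ζ i ^ a i.succ = ζ i ^ b i.succ :=
          (mul_inv_eq_one₀ (pow_ne_zero _ (hζne i))).mp (hall i)
        have h1u : (Units.mk0 (ζ i) (hζne i)) ^ a i.succ = (Units.mk0 (ζ i) (hζne i)) ^ b i.succ :=
          Units.ext (by simpa using h1)
        have h2 := pow_eq_pow_iff_modEq.mp h1u
        have ho : orderOf (Units.mk0 (ζ i) (hζne i)) = b i.succ + 1 := by
          rw [← orderOf_units]
          exact ((hζ i).eq_orderOf).symm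
        rwa [ho] at h2
      push_neg at hnot
      obtain ⟨i₀, hi₀⟩ := hnot
      refine Finset.prod_eq_zero (Finset.mem_univ i₀) ?_
      refine geom_root_sum_zero _ _ ?_ hi₀
      rw [mul_pow, ← pow_mul, Nat.mul_comm, pow_mul, (hζ i₀).pow_eq_one, one_pow,
        inv_pow, ← pow_mul, Nat.mul_comm, pow_mul, (hζ i₀).pow_eq_one, one_pow, inv_one,
        one_mul]
  -- the key polynomial identity
  have key : (∑ t, C (γ t) * (∑ i', C (w t i') * X i') ^ d : MvPolynomial (Fin (n+1)) k)
      = C K * monomial (Finsupp.equivFunOnFinite.symm b) 1 := by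
    have expand : ∀ t, (C (γ t) * (∑ i', C (w t i') * X i') ^ d : MvPolynomial (Fin (n+1)) k)
        = ∑ a ∈ piAntidiag univ d,
            C (γ t * ((Nat.multinomial univ a : k) * ∏ i', w t i' ^ a i'))
              * monomial (Finsupp.equivFunOnFinite.symm a) 1 := by
      intro t
      rw [wr_expand, Finset.mul_sum]
      exact Finset.sum_congr rfl fun a _ => by simp only [map_mul]; ring
    rw [Finset.sum_congr rfl fun t _ => expand t, Finset.sum_comm]
    rw [Finset.sum_eq_single b]
    · rw [← Finset.sum_mul, ← map_sum]
      congr 2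
      have : ∑ t, γ t * ((Nat.multinomial univ b : k) * ∏ i', w t i' ^ b i')
          = (Nat.multinomial univ b : k) * ∑ t, γ t * ∏ i', w t i' ^ b i' := by
        rw [Finset.mul_sum]; exact Finset.sum_congr rfl fun t _ => by ring
      rw [this, hchar b hd.symm, if_pos rfl, hK]
      ring
    · intro a ha hab
      rw [← Finset.sum_mul, ← map_sum]
      have : ∑ t, γ t * ((Nat.multinomial univ a : k) * ∏ i', w t i' ^ a i')
          = (Nat.multinomial univ a : k) * ∑ t, γ t * ∏ i', w t i' ^ a i' := by
        rw [Finset.mul_sum]; exact Finset.sum_congr rfl fun t _ => by ring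
      rw [this, hchar a (by simpa using (Finset.mem_piAntidiag.mp ha).1), if_neg hab,
        mul_zero, map_zero, zero_mul]
    · intro hb
      exact absurd (Finset.mem_piAntidiag.mpr ⟨hd.symm, fun i _ => Finset.mem_univ i⟩) hb
  -- extract d-th roots and conclude
  have hroot : ∀ t, ∃ μ : k, μ ^ d = γ t / K :=
    fun t => IsAlgClosed.exists_pow_nat_eq (γ t / K) hdpos
  choose μ hμ using hroot
  have hcardT : Fintype.card (∀ i : Fin n, Fin (b i.succ + 1)) = N := by
    rw [Fintype.card_pi, hN]
    exact Finset.prod_congr rfl fun i _ => Fintype.card_fin _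
  let e := Fintype.equivFinOfCardEq hcardT
  refine ⟨fun x => C (μ (e.symm x)) * ∑ i', C (w (e.symm x) i') * X i', fun x => ?_, ?_⟩
  · exact MvPolynomial.IsHomogeneous.C_mul
      (MvPolynomial.IsHomogeneous.sum univ _ 1 fun i' _ => isHomogeneous_C_mul_X _ i') _
  · show (∏ i, X i ^ b i : MvPolynomial (Fin (n+1)) k)
        = ∑ x : Fin N, (C (μ (e.symm x)) * ∑ i', C (w (e.symm x) i') * X i') ^ d
    rw [Equiv.sum_comp e.symm (fun t => (C (μ t) * ∑ i', C (w t i') * X i') ^ d)]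
    have : ∀ t, (C (μ t) * ∑ i', C (w t i') * X i') ^ d
        = C (K⁻¹) * (C (γ t) * (∑ i', C (w t i') * X i') ^ d) := by
      intro t
      rw [mul_pow, ← C_pow, hμ, div_eq_inv_mul, map_mul, mul_assoc]
    rw [Finset.sum_congr rfl fun t _ => this t, ← Finset.mul_sum, key, ← mul_assoc, ← map_mul,
      inv_mul_cancel₀ hKne, map_one, one_mul, prod_X_pow_univ]

lemma wr_moments {k : Type*} [Field k] [CharZero k] {n s : ℕ} (b : Fin (n+1) → ℕ)
    (M : Fin s → MvPolynomial (Fin (n+1)) k) (hM1 : ∀ j, (M j).IsHomogeneous 1)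
    (hdec : (∏ i, X i ^ b i : MvPolynomial (Fin (n+1)) k) = ∑ j, M j ^ (∑ i, b i)) :
    ∀ a : Fin (n+1) → ℕ, (∑ i, a i) = (∑ i, b i) →
      (∑ j, ∏ i, (coeff (Finsupp.single i 1) (M j)) ^ a i)
        = if a = b then ((Nat.multinomial univ b : k))⁻¹ else 0 := by
  intro a ha
  have hmne : ∀ c : Fin (n+1) → ℕ, (Nat.multinomial univ c : k) ≠ 0 :=
    fun c => Nat.cast_ne_zero.mpr (Nat.multinomial_pos _ _).ne'
  have hco := congrArg (coeff (Finsupp.equivFunOnFinite.symm a)) hdec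
  rw [prod_X_pow_univ, coeff_monomial] at hco
  rw [coeff_sum] at hco
  have hexp : ∀ j, coeff (Finsupp.equivFunOnFinite.symm a) (M j ^ (∑ i, b i))
      = (Nat.multinomial univ a : k) * ∏ i, (coeff (Finsupp.single i 1) (M j)) ^ a i := by
    intro j
    conv_lhs => rw [hom1_rep (hM1 j)]
    exact coeff_wr_expand _ _ a ha
  rw [Finset.sum_congr rfl fun j _ => hexp j, ← Finset.mul_sum] at hco
  have hif : (Finsupp.equivFunOnFinite.symm b = Finsupp.equivFunOnFinite.symm a) ↔ (a = b) := by
    constructor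
    · intro h; exact (Finsupp.equivFunOnFinite.symm.injective h).symm
    · intro h; rw [h]
  by_cases hab : a = b
  · rw [if_pos hab]
    rw [if_pos (hif.mpr hab)] at hco
    rw [hab] at hco ⊢
    exact eq_inv_of_mul_eq_one_right hco.symm
  · rw [if_neg hab]
    rw [if_neg (fun h => hab (hif.mp h))] at hco
    exact ((mul_eq_zero.mp hco.symm).resolve_left (hmne a))

lemma lincomb_lincomb {k : Type*} [CommRing k] {N : ℕ} (v : Fin N → k)
    (A : Matrix (Fin N) (Fin N) k) :
    (∑ i, C (v i) * ∑ t, C (A i t) * X t : MvPolynomial (Fin N) k)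
      = ∑ t, C (∑ i, v i * A i t) * X t := by
  simp_rw [Finset.mul_sum, map_sum, Finset.sum_mul]
  rw [Finset.sum_comm]
  refine Finset.sum_congr rfl fun t _ => Finset.sum_congr rfl fun i _ => by
    rw [map_mul]; ring

lemma lincomb_delta {k : Type*} [CommRing k] {N : ℕ} (j : Fin N) :
    (∑ t, C (if j = t then (1:k) else 0) * X t : MvPolynomial (Fin N) k) = X j := by
  rw [Finset.sum_eq_single j]
  · simp
  · intro t _ ht; simp [Ne.symm ht]
  · intro h; exact absurd (Finset.mem_univ j) h

lemma wr_changevar {k : Type*} [Field k] {n : ℕ} (L : Fin (n+1) → MvPolynomial (Fin (n+1)) k)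
    (hL1 : ∀ i, (L i).IsHomogeneous 1) (hL : LinearIndependent k L) (d : ℕ)
    (b : Fin (n+1) → ℕ) :
    {s | ∃ Mf : Fin s → MvPolynomial (Fin (n+1)) k,
        (∀ i, (Mf i).IsHomogeneous 1) ∧ (∏ i, L i ^ b i) = ∑ i, Mf i ^ d}
    = {s | ∃ Mf : Fin s → MvPolynomial (Fin (n+1)) k,
        (∀ i, (Mf i).IsHomogeneous 1) ∧ (∏ i, X i ^ b i) = ∑ i, Mf i ^ d} := by
  classical
  set A : Matrix (Fin (n+1)) (Fin (n+1)) k :=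
    Matrix.of (fun i j => coeff (Finsupp.single j 1) (L i)) with hA
  have hrepL : ∀ i, L i = ∑ j, C (A i j) * X j := fun i => hom1_rep (hL1 i)
  have hrows : LinearIndependent k (fun i => A i) := by
    rw [Fintype.linearIndependent_iff]
    intro g hg
    have hP : (∑ i, C (g i) * L i : MvPolynomial (Fin (n+1)) k) = 0 := by
      have h1 : ∀ j, coeff (Finsupp.single j 1) (∑ i, C (g i) * L i) = 0 := by
        intro j
        rw [coeff_sum]
        have := congrFun hg j
        simpa [Finset.sum_apply, coeff_C_mul, hA] using this
      have h2 : (∑ i, C (g i) * L i : MvPolynomial (Fin (n+1)) k).IsHomogeneous 1 :=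
        MvPolynomial.IsHomogeneous.sum univ _ 1 fun i _ => (hL1 i).C_mul (g i)
      rw [hom1_rep h2]
      exact Finset.sum_eq_zero fun j _ => by rw [h1 j, map_zero, zero_mul]
    have := Fintype.linearIndependent_iff.mp hL g (by
      simpa [MvPolynomial.smul_eq_C_mul] using hP)
    exact this
  have hAu : IsUnit A := Matrix.linearIndependent_rows_iff_isUnit.mp hrows
  have hdet : IsUnit A.det := (Matrix.isUnit_iff_isUnit_det A).mp hAu
  set B := A⁻¹ with hB
  have hAB : A * B = 1 := Matrix.mul_nonsing_inv A hdet
  have hBA : B * A = 1 := Matrix.nonsing_inv_mul A hdet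
  set φ : MvPolynomial (Fin (n+1)) k →ₐ[k] MvPolynomial (Fin (n+1)) k :=
    aeval (fun i => L i) with hφ
  set ψ : MvPolynomial (Fin (n+1)) k →ₐ[k] MvPolynomial (Fin (n+1)) k :=
    aeval (fun j => ∑ i, C (B j i) * X i) with hψ
  have hψL : ∀ i, ψ (L i) = X i := by
    intro i
    rw [hrepL i]
    rw [map_sum]
    have h1 : ∀ j, ψ (C (A i j) * X j) = C (A i j) * ∑ t, C (B j t) * X t := by
      intro j
      rw [map_mul, aeval_C, hψ, aeval_X]
      rfl
    rw [Finset.sum_congr rfl fun j _ => h1 j, lincomb_lincomb (fun j => A i j) B]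
    have h2 : ∀ t, (∑ j, A i j * B j t) = if i = t then (1:k) else 0 := by
      intro t
      have := congrFun (congrFun hAB i) t
      simpa [Matrix.mul_apply, Matrix.one_apply] using this
    rw [Finset.sum_congr rfl fun t _ => by rw [h2 t]]
    exact lincomb_delta i
  have hφψX : ∀ j, φ (ψ (X j)) = X j := by
    intro j
    rw [hψ, aeval_X, map_sum]
    have h1 : ∀ i, φ (C (B j i) * X i) = C (B j i) * ∑ t, C (A i t) * X t := by
      intro i
      rw [map_mul, aeval_C, hφ, aeval_X]
      exact congrArg _ (hrepL i)
    rw [Finset.sum_congr rfl fun i _ => h1 i, lincomb_lincomb (fun i => B j i) A]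
    have h2 : ∀ t, (∑ i, B j i * A i t) = if j = t then (1:k) else 0 := by
      intro t
      have := congrFun (congrFun hBA j) t
      simpa [Matrix.mul_apply, Matrix.one_apply] using this
    rw [Finset.sum_congr rfl fun t _ => by rw [h2 t]]
    exact lincomb_delta j
  -- homogeneity preservation
  have hφhom : ∀ P : MvPolynomial (Fin (n+1)) k, P.IsHomogeneous 1 → (φ P).IsHomogeneous 1 := by
    intro P hP
    rw [hom1_rep hP, map_sum]
    refine MvPolynomial.IsHomogeneous.sum univ _ 1 fun i _ => ?_
    rw [map_mul, aeval_C, hφ, aeval_X]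
    exact (hL1 i).C_mul _
  have hψhom : ∀ P : MvPolynomial (Fin (n+1)) k, P.IsHomogeneous 1 → (ψ P).IsHomogeneous 1 := by
    intro P hP
    rw [hom1_rep hP, map_sum]
    refine MvPolynomial.IsHomogeneous.sum univ _ 1 fun i _ => ?_
    rw [map_mul, aeval_C, hψ, aeval_X]
    exact MvPolynomial.IsHomogeneous.C_mul
      (MvPolynomial.IsHomogeneous.sum univ _ 1 fun t _ => isHomogeneous_C_mul_X _ t) _
  have hφF : φ (∏ i, X i ^ b i) = ∏ i, L i ^ b i := by
    rw [map_prod]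
    exact Finset.prod_congr rfl fun i _ => by rw [map_pow, hφ, aeval_X]
  have hψF : ψ (∏ i, L i ^ b i) = ∏ i, X i ^ b i := by
    rw [map_prod]
    exact Finset.prod_congr rfl fun i _ => by rw [map_pow, hψL i]
  ext s
  simp only [Set.mem_setOf_eq]
  constructor
  · rintro ⟨Mf, hMf1, hMfd⟩
    refine ⟨fun j => ψ (Mf j), fun j => hψhom _ (hMf1 j), ?_⟩
    rw [← hψF, hMfd, map_sum]
    exact Finset.sum_congr rfl fun j _ => (map_pow ψ _ d)
  · rintro ⟨Mf, hMf1, hMfd⟩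
    refine ⟨fun j => φ (Mf j), fun j => hφhom _ (hMf1 j), ?_⟩
    rw [← hφF, hMfd, map_sum]
    exact Finset.sum_congr rfl fun j _ => (map_pow φ _ d)

/-- The Waring rank of a degree `d` form: the least number of `d`-th powers of
linear forms needed to write it as a sum. -/
noncomputable def WaringRank {n : ℕ} (k : Type*) [Field k] (d : ℕ)
    (F : MvPolynomial (Fin n) k) : ℕ :=
  sInf {s | ∃ L : Fin s → MvPolynomial (Fin n) k,
    (∀ i, (L i).IsHomogeneous 1) ∧ F = ∑ i, L i ^ d}

theorem waring_rank_of_product_of_linear_forms {k : Type*} [Field k] [IsAlgClosed k]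
    [CharZero k] {n : ℕ}
    (L : Fin (n + 1) → MvPolynomial (Fin (n + 1)) k)
    (hL1 : ∀ i, (L i).IsHomogeneous 1) (hL : LinearIndependent k L)
    (b : Fin (n + 1) → ℕ) (hmono : Monotone b) (hb : ∀ i, 1 ≤ b i) :
    WaringRank k (∑ i, b i) (∏ i, L i ^ b i) =
      ∏ i ∈ Finset.univ.erase 0, (b i + 1) := by
  classical
  set d := ∑ i, b i with hd
  set N := ∏ i : Fin n, (b i.succ + 1) with hN
  have herase : ∏ i ∈ Finset.univ.erase 0, (b i + 1) = N := by
    have h1 : (b 0 + 1) * ∏ i ∈ Finset.univ.erase 0, (b i + 1)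
        = (b 0 + 1) * N := by
      rw [Finset.mul_prod_erase univ (fun i => b i + 1) (Finset.mem_univ 0),
        Fin.prod_univ_succ, hN]
    exact Nat.eq_of_mul_eq_mul_left (by omega) h1
  rw [herase]
  rw [WaringRank, wr_changevar L hL1 hL d b]
  -- upper bound: N is in the set
  obtain ⟨Lf, hLf1, hLfd⟩ := wr_upper_bound (k := k) b hmono (hb 0)
  have hNmem : N ∈ {s | ∃ Mf : Fin s → MvPolynomial (Fin (n+1)) k,
      (∀ i, (Mf i).IsHomogeneous 1) ∧ (∏ i, X i ^ b i) = ∑ i, Mf i ^ d} :=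
    ⟨Lf, hLf1, hLfd⟩
  refine le_antisymm (Nat.sInf_le hNmem) ?_
  -- lower bound
  obtain ⟨Mf, hMf1, hMfd⟩ := Nat.sInf_mem (⟨N, hNmem⟩ : Set.Nonempty _)
  have hmom := wr_moments b Mf hMf1 hMfd
  exact wr_lower_bound b (hb 0)
    (fun j i => coeff (Finsupp.single i 1) (Mf j))
    ((Nat.multinomial univ b : k))⁻¹
    (inv_ne_zero (Nat.cast_ne_zero.mpr (Nat.multinomial_pos _ _).ne'))
    hmom
end

section
/- For d > 2, the maximum of ∏_{i=2}^3 (b_i+1) over monomials x_1^{b_1}x_2^{b_2}x_3^{b_3} of degree d with 1 ≤ b_1 ≤ b_2 ≤ b_3 equals ((d+1)/2)^2 if d is odd, and (d/2)(d/2 + 1) if d is even. Equivalently, the maximal Waring rank of a degree-d monomial in three variables (divisible by all three variables) is ((d+1)/2)^2 for d odd and (d/2)(d/2+1) for d even. -/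
lemma aux_prod_le (x y : ℕ) (hxy : x ≤ y) :
    x * y ≤ ((x + y) / 2) * ((x + y + 1) / 2) := by
  rcases Nat.even_or_odd (x + y) with h | h
  · obtain ⟨q, hq⟩ := h
    have h1 : (x + y) / 2 = q := by omega
    have h2 : (x + y + 1) / 2 = q := by omega
    have hx : x ≤ q := by omega
    rw [h1, h2]
    have hq' : (x:ℤ) + y = q + q := by exact_mod_cast hq
    have hx' : (x:ℤ) ≤ q := by exact_mod_cast hx
    zify
    nlinarith [sq_nonneg ((q:ℤ) - x)]
  · obtain ⟨q, hq⟩ := h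
    have h1 : (x + y) / 2 = q := by omega
    have h2 : (x + y + 1) / 2 = q + 1 := by omega
    have hx : x ≤ q := by omega
    rw [h1, h2]
    have hq' : (x:ℤ) + y = 2 * q + 1 := by exact_mod_cast hq
    have hx' : (x:ℤ) ≤ q := by exact_mod_cast hx
    zify
    nlinarith [mul_nonneg (by linarith : (0:ℤ) ≤ q - x) (by linarith : (0:ℤ) ≤ q + 1 - x)]

lemma aux_mono (s t : ℕ) (h : s ≤ t) :
    (s / 2) * ((s + 1) / 2) ≤ (t / 2) * ((t + 1) / 2) :=
  Nat.mul_le_mul (Nat.div_le_div_right h) (Nat.div_le_div_right (by omega))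

theorem max_rank_monomial_three_variables (d : ℕ) (hd : 2 < d) :
    IsGreatest
      {r : ℕ | ∃ b₁ b₂ b₃ : ℕ, 1 ≤ b₁ ∧ b₁ ≤ b₂ ∧ b₂ ≤ b₃ ∧
        b₁ + b₂ + b₃ = d ∧ r = (b₂ + 1) * (b₃ + 1)}
      (if Odd d then ((d + 1) / 2) ^ 2 else (d / 2) * (d / 2 + 1)) := by
  constructor
  · -- membership
    rcases Nat.even_or_odd d with ⟨k, hk⟩ | ⟨k, hk⟩
    · have hodd : ¬ Odd d := by simp [Nat.odd_iff]; omega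
      rw [if_neg hodd]
      refine ⟨1, k - 1, k, le_refl 1, by omega, by omega, by omega, ?_⟩
      have h1 : d / 2 = k := by omega
      have h2 : k - 1 + 1 = k := by omega
      rw [h1, h2]
    · have hodd : Odd d := ⟨k, hk⟩
      rw [if_pos hodd]
      refine ⟨1, k, k, le_refl 1, by omega, le_refl k, by omega, ?_⟩
      have h1 : (d + 1) / 2 = k + 1 := by omega
      rw [h1]; ring
  · -- upper bound
    rintro r ⟨b₁, b₂, b₃, hb₁, h12, h23, hsum, hr⟩
    have key : r ≤ ((d + 1) / 2) * ((d + 2) / 2) := by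
      rw [hr]
      calc (b₂ + 1) * (b₃ + 1)
          ≤ ((b₂ + 1 + (b₃ + 1)) / 2) * ((b₂ + 1 + (b₃ + 1) + 1) / 2) :=
            aux_prod_le _ _ (by omega)
        _ ≤ ((d + 1) / 2) * ((d + 1 + 1) / 2) := aux_mono _ _ (by omega)
    rcases Nat.even_or_odd d with ⟨k, hk⟩ | ⟨k, hk⟩
    · have hodd : ¬ Odd d := by simp [Nat.odd_iff]; omega
      rw [if_neg hodd]
      have h1 : (d + 1) / 2 = d / 2 := by omega
      have h2 : (d + 2) / 2 = d / 2 + 1 := by omega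
      rw [h1, h2] at key; exact key
    · have hodd : Odd d := ⟨k, hk⟩
      rw [if_pos hodd]
      have h1 : (d + 2) / 2 = (d + 1) / 2 := by omega
      rw [h1, ← pow_two] at key; exact key
end

section
/- The Waring rank of x_0 x_1 x_2 over an algebraically closed field of characteristic zero is exactly 4: it is a sum of 4 cubes of linear forms but not of 3. -/
open MvPolynomial
set_option maxHeartbeats 1000000

lemma lin_homog {k : Type*} [Field k] (a b c : k) :
    (C a * X 0 + C b * X 1 + C c * X 2 : MvPolynomial (Fin 3) k).IsHomogeneous 1 := by
  refine (((isHomogeneous_C _ _).mul (isHomogeneous_X _ _)).add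
    ((isHomogeneous_C _ _).mul (isHomogeneous_X _ _))).add
    ((isHomogeneous_C _ _).mul (isHomogeneous_X _ _))


lemma homog_one_eq {k : Type*} [Field k] (p : MvPolynomial (Fin 3) k) (hp : p.IsHomogeneous 1) :
    p = C (coeff (Finsupp.single 0 1) p) * X 0 + C (coeff (Finsupp.single 1 1) p) * X 1
      + C (coeff (Finsupp.single 2 1) p) * X 2 := by
  ext m
  simp only [coeff_add, coeff_C_mul, coeff_X']
  by_cases h0 : m = Finsupp.single 0 1
  · subst h0; simp [Finsupp.single_eq_single_iff]
  by_cases h1 : m = Finsupp.single 1 1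
  · subst h1; simp [Finsupp.single_eq_single_iff]
  by_cases h2 : m = Finsupp.single 2 1
  · subst h2; simp [Finsupp.single_eq_single_iff]
  · rw [if_neg (Ne.symm h0), if_neg (Ne.symm h1), if_neg (Ne.symm h2)]
    simp only [mul_zero, add_zero, zero_add]
    by_contra hne
    have hd := hp hne
    have hsum : m 0 + m 1 + m 2 = 1 := by
      simp [Finsupp.weight_apply, Finsupp.sum_fintype, Fin.sum_univ_three] at hd
      omega
    have : m 0 = 1 ∧ m 1 = 0 ∧ m 2 = 0 ∨ m 0 = 0 ∧ m 1 = 1 ∧ m 2 = 0 ∨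
        m 0 = 0 ∧ m 1 = 0 ∧ m 2 = 1 := by omega
    rcases this with ⟨x,y,z⟩|⟨x,y,z⟩|⟨x,y,z⟩
    · exact h0 (by ext j; fin_cases j <;> simp [x,y,z, Finsupp.single_apply])
    · exact h1 (by ext j; fin_cases j <;> simp [x,y,z, Finsupp.single_apply])
    · exact h2 (by ext j; fin_cases j <;> simp [x,y,z, Finsupp.single_apply])


lemma no_three {k : Type*} [Field k] [CharZero k] (a b c : Fin 3 → k)
    (hF : (X 0 * X 1 * X 2 : MvPolynomial (Fin 3) k)
      = ∑ i : Fin 3, (C (a i) * X 0 + C (b i) * X 1 + C (c i) * X 2) ^ 3) : False := by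
  classical
  have h3p : ∀ j : Fin 3, (pderiv j) (3 : MvPolynomial (Fin 3) k) = 0 := fun j => by
    rw [← map_ofNat (C : k →+* MvPolynomial (Fin 3) k) 3, pderiv_C]
  -- extract equations
  have h00 : a 0 ^ 2 * a 0 + a 1 ^ 2 * a 1 + a 2 ^ 2 * a 2 = 0 := by
    have h := congrArg (eval (fun j : Fin 3 => if j = 0 then (1:k) else 0))
      (congrArg (pderiv (0 : Fin 3)) hF)
    simp [Fin.sum_univ_three, pderiv_mul, pderiv_pow, pderiv_X_self, pderiv_X_of_ne, pderiv_C] at h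
    linear_combination -h/3
  have h10 : b 0 * a 0 ^ 2 + b 1 * a 1 ^ 2 + b 2 * a 2 ^ 2 = 0 := by
    have h := congrArg (eval (fun j : Fin 3 => if j = 0 then (1:k) else 0))
      (congrArg (pderiv (1 : Fin 3)) hF)
    simp [Fin.sum_univ_three, pderiv_mul, pderiv_pow, pderiv_X_self, pderiv_X_of_ne, pderiv_C] at h
    linear_combination -h/3
  have h20 : c 0 * a 0 ^ 2 + c 1 * a 1 ^ 2 + c 2 * a 2 ^ 2 = 0 := by
    have h := congrArg (eval (fun j : Fin 3 => if j = 0 then (1:k) else 0))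
      (congrArg (pderiv (2 : Fin 3)) hF)
    simp [Fin.sum_univ_three, pderiv_mul, pderiv_pow, pderiv_X_self, pderiv_X_of_ne, pderiv_C] at h
    linear_combination -h/3
  have h01 : a 0 * b 0 ^ 2 + a 1 * b 1 ^ 2 + a 2 * b 2 ^ 2 = 0 := by
    have h := congrArg (eval (fun j : Fin 3 => if j = 1 then (1:k) else 0))
      (congrArg (pderiv (0 : Fin 3)) hF)
    simp [Fin.sum_univ_three, pderiv_mul, pderiv_pow, pderiv_X_self, pderiv_X_of_ne, pderiv_C] at h
    linear_combination -h/3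
  have h21 : c 0 * b 0 ^ 2 + c 1 * b 1 ^ 2 + c 2 * b 2 ^ 2 = 0 := by
    have h := congrArg (eval (fun j : Fin 3 => if j = 1 then (1:k) else 0))
      (congrArg (pderiv (2 : Fin 3)) hF)
    simp [Fin.sum_univ_three, pderiv_mul, pderiv_pow, pderiv_X_self, pderiv_X_of_ne, pderiv_C] at h
    linear_combination -h/3
  have h02 : a 0 * c 0 ^ 2 + a 1 * c 1 ^ 2 + a 2 * c 2 ^ 2 = 0 := by
    have h := congrArg (eval (fun j : Fin 3 => if j = 2 then (1:k) else 0))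
      (congrArg (pderiv (0 : Fin 3)) hF)
    simp [Fin.sum_univ_three, pderiv_mul, pderiv_pow, pderiv_X_self, pderiv_X_of_ne, pderiv_C] at h
    linear_combination -h/3
  have h12 : b 0 * c 0 ^ 2 + b 1 * c 1 ^ 2 + b 2 * c 2 ^ 2 = 0 := by
    have h := congrArg (eval (fun j : Fin 3 => if j = 2 then (1:k) else 0))
      (congrArg (pderiv (1 : Fin 3)) hF)
    simp [Fin.sum_univ_three, pderiv_mul, pderiv_pow, pderiv_X_self, pderiv_X_of_ne, pderiv_C] at h
    linear_combination -h/3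
  have hQ : a 0 * b 0 * c 0 + a 1 * b 1 * c 1 + a 2 * b 2 * c 2 = 1/6 := by
    have h := congrArg (eval (fun j : Fin 3 => if j = 2 then (1:k) else 0))
      (congrArg (pderiv (1 : Fin 3)) (congrArg (pderiv (0 : Fin 3)) hF))
    simp [h3p, Fin.sum_univ_three, pderiv_mul, pderiv_pow, pderiv_X_self, pderiv_X_of_ne,
      pderiv_C] at h
    linear_combination -h / 6
  -- matrix argument
  by_cases ha : a 0 = 0 ∧ a 1 = 0 ∧ a 2 = 0
  · obtain ⟨x, y, z⟩ := ha
    have : (0 : k) = 1/6 := by linear_combination hQ - b 0 * c 0 * x - b 1 * c 1 * y - b 2 * c 2 * z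
    norm_num at this
  · set M : Matrix (Fin 3) (Fin 3) k :=
      !![a 0, b 0, c 0; a 1, b 1, c 1; a 2, b 2, c 2] with hM
    have hdet : M.det = 0 := by
      rw [← Matrix.exists_vecMul_eq_zero_iff]
      refine ⟨![a 0 ^ 2, a 1 ^ 2, a 2 ^ 2], ?_, ?_⟩
      · intro h0
        apply ha
        have e0 : a 0 ^ 2 = 0 := by simpa using congrFun h0 0
        have e1 : a 1 ^ 2 = 0 := by simpa using congrFun h0 1
        have e2 : a 2 ^ 2 = 0 := by simpa using congrFun h0 2
        exact ⟨pow_eq_zero_iff two_ne_zero |>.mp e0, pow_eq_zero_iff two_ne_zero |>.mp e1,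
          pow_eq_zero_iff two_ne_zero |>.mp e2⟩
      · funext j
        fin_cases j <;>
          simp [hM, Matrix.vecMul, dotProduct, Fin.sum_univ_three] <;>
          first
          | linear_combination h00
          | linear_combination h10
          | linear_combination h20
    obtain ⟨v, hvne, hv⟩ := (Matrix.exists_mulVec_eq_zero_iff).mpr hdet
    have hv0 := congrFun hv 0
    have hv1 := congrFun hv 1
    have hv2 := congrFun hv 2
    simp [hM, Matrix.mulVec, dotProduct, Fin.sum_univ_three] at hv0 hv1 hv2
    apply hvne
    funext j
    fin_cases j
    · show v 0 = 0
      linear_combination -6 * v 0 * hQ + 6 * b 0 * c 0 * hv0 + 6 * b 1 * c 1 * hv1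
        + 6 * b 2 * c 2 * hv2 - 6 * v 1 * h21 - 6 * v 2 * h12
    · show v 1 = 0
      linear_combination -6 * v 1 * hQ + 6 * a 0 * c 0 * hv0 + 6 * a 1 * c 1 * hv1
        + 6 * a 2 * c 2 * hv2 - 6 * v 0 * h20 - 6 * v 2 * h02
    · show v 2 = 0
      linear_combination -6 * v 2 * hQ + 6 * a 0 * b 0 * hv0 + 6 * a 1 * b 1 * hv1
        + 6 * a 2 * b 2 * hv2 - 6 * v 0 * h10 - 6 * v 1 * h01

lemma upper {k : Type*} [Field k] [IsAlgClosed k] [CharZero k] :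
    ∃ L : Fin 4 → MvPolynomial (Fin 3) k,
      (∀ i, (L i).IsHomogeneous 1) ∧ (X 0 * X 1 * X 2 : MvPolynomial (Fin 3) k) = ∑ i, L i ^ 3 := by
  obtain ⟨r, hr⟩ := IsAlgClosed.exists_pow_nat_eq ((24 : k)⁻¹) (n := 3) (by norm_num)
  refine ⟨![C r * X 0 + C r * X 1 + C r * X 2,
            C (-r) * X 0 + C (-r) * X 1 + C r * X 2,
            C (-r) * X 0 + C r * X 1 + C (-r) * X 2,
            C r * X 0 + C (-r) * X 1 + C (-r) * X 2], ?_, ?_⟩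
  · intro i; fin_cases i <;> exact lin_homog _ _ _
  · have h24 : (24 : k) * r ^ 3 = 1 := by
      rw [hr]; field_simp
    have hc : (24 : MvPolynomial (Fin 3) k) * C r ^ 3 = 1 := by
      rw [← map_pow, ← map_ofNat (C : k →+* MvPolynomial (Fin 3) k) 24, ← map_mul, h24, map_one]
    rw [Fin.sum_univ_four]
    simp only [Matrix.cons_val_zero, Matrix.cons_val_one, Matrix.head_cons, Matrix.cons_val_two, Matrix.cons_val_three, Matrix.tail_cons, map_neg]
    linear_combination (-(X 0 * X 1 * X 2) : MvPolynomial (Fin 3) k) * hc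

theorem waring_rank_xyz {k : Type*} [Field k] [IsAlgClosed k] [CharZero k] :
    WaringRank k 3 (X 0 * X 1 * X 2 : MvPolynomial (Fin 3) k) = 4 := by
  rw [WaringRank]
  have upper := upper (k := k)
  have no_three' := no_three (k := k)
  have homog_one_eq' := homog_one_eq (k := k)
  refine le_antisymm (Nat.sInf_le upper) (le_csInf ⟨4, upper⟩ ?_)
  rintro s ⟨L, hhom, hsum⟩
  by_contra hlt
  push_neg at hlt
  have hs3 : s ≤ 3 := by omega
  -- pad to exactly 3 linear forms
  set L' : Fin 3 → MvPolynomial (Fin 3) k :=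
    fun i => if h : (i : ℕ) < s then L ⟨i, h⟩ else 0 with hL'
  have hhom' : ∀ i, (L' i).IsHomogeneous 1 := by
    intro i
    by_cases h : (i : ℕ) < s
    · rw [hL']; simp only [dif_pos h]; exact hhom _
    · rw [hL']; simp only [dif_neg h]; exact isHomogeneous_zero _ _ _
  have hsum' : (X 0 * X 1 * X 2 : MvPolynomial (Fin 3) k) = ∑ i : Fin 3, L' i ^ 3 := by
    rw [hsum]
    set f : ℕ → MvPolynomial (Fin 3) k := fun i => if h : i < s then L ⟨i, h⟩ ^ 3 else 0 with hf
    have key : ∀ i : Fin 3, L' i ^ 3 = f (i : ℕ) := by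
      intro i
      by_cases h : (i : ℕ) < s <;> simp [hL', hf, h]
    calc ∑ i : Fin s, L i ^ 3 = ∑ i : Fin s, f (i : ℕ) := by
          refine Finset.sum_congr rfl fun i _ => ?_
          rw [hf]
          simp [i.isLt]
      _ = ∑ i ∈ Finset.range s, f i := Fin.sum_univ_eq_sum_range f s
      _ = ∑ i ∈ Finset.range 3, f i := by
          refine Finset.sum_subset (Finset.range_subset_range.mpr hs3) ?_
          intro x _ hx
          rw [Finset.mem_range] at hx
          rw [hf]
          simp [hx]
      _ = ∑ i : Fin 3, f (i : ℕ) := (Fin.sum_univ_eq_sum_range f 3).symm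
      _ = ∑ i : Fin 3, L' i ^ 3 := Finset.sum_congr rfl fun i _ => (key i).symm
  -- expand the linear forms
  have hexp : (X 0 * X 1 * X 2 : MvPolynomial (Fin 3) k)
      = ∑ i : Fin 3, (C (coeff (Finsupp.single 0 1) (L' i)) * X 0
        + C (coeff (Finsupp.single 1 1) (L' i)) * X 1
        + C (coeff (Finsupp.single 2 1) (L' i)) * X 2) ^ 3 := by
    rw [hsum']
    exact Finset.sum_congr rfl fun i _ => by rw [← homog_one_eq' _ (hhom' i)]
  exact no_three' _ _ _ hexp
end

section
/- Let 1 ≤ b_1 ≤ ... ≤ b_n, d = b_1+...+b_n, and M = x_1^{b_1}···x_n^{b_n}. Set r = ∏_{i=2}^n (b_i+1). Then there exist scalars γ_1,...,γ_r ∈ k such that M = ∑_{j=1}^r γ_j (x_1 + ε_j(2)x_2 + ... + ε_j(n)x_n)^d, where the tuples (ε_j(2),...,ε_j(n)) range over all choices with ε_j(i) a (b_i+1)-th root of unity. -/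
open MvPolynomial Finset

section AuxSOP

lemma aux_geom {k : Type*} [Field k] {m : ℕ} {ζ : k} (hζ : IsPrimitiveRoot ζ m) (s : ℕ) :
    ∑ x ∈ Finset.range m, (ζ ^ s) ^ x = if m ∣ s then (m : k) else 0 := by
  by_cases h : m ∣ s
  · rw [if_pos h, (hζ.pow_eq_one_iff_dvd s).mpr h]
    simp
  · rw [if_neg h]
    have h1 : ζ ^ s ≠ 1 := fun hc => h ((hζ.pow_eq_one_iff_dvd s).mp hc)
    have h2 : (∑ x ∈ Finset.range m, (ζ ^ s) ^ x) * (ζ ^ s - 1) = 0 := by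
      rw [geom_sum_mul, ← pow_mul, mul_comm s m, pow_mul, hζ.pow_eq_one, one_pow, sub_self]
    rcases mul_eq_zero.mp h2 with h3 | h3
    · exact h3
    · exact absurd (sub_eq_zero.mp h3) h1

lemma aux_comb {n : ℕ} (b : Fin (n+1) → ℕ) (hmono : Monotone b) (a : Fin (n+1) → ℕ)
    (hsum : ∑ i, a i = ∑ i, b i)
    (hdvd : ∀ i' : Fin n, (b i'.succ + 1) ∣ (a i'.succ + 1)) : a = b := by
  have key : ∀ i' : Fin n, a i'.succ = b i'.succ := by
    by_contra hc
    push_neg at hc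
    obtain ⟨i0, hi0⟩ := hc
    have hge : ∀ i' : Fin n, b i'.succ ≤ a i'.succ := fun i' => by
      have := Nat.le_of_dvd (Nat.succ_pos _) (hdvd i')
      omega
    have hbig : 2 * b i0.succ + 2 ≤ a i0.succ + 1 := by
      obtain ⟨c, hc2⟩ := hdvd i0
      have hc3 : 2 ≤ c := by
        rcases Nat.lt_or_ge c 2 with h | h
        · interval_cases c <;> omega
        · exact h
      calc 2 * b i0.succ + 2 = (b i0.succ + 1) * 2 := by ring
        _ ≤ (b i0.succ + 1) * c := Nat.mul_le_mul_left _ hc3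
        _ = a i0.succ + 1 := hc2.symm
    have hsucc_a : ∑ i, a i = a 0 + ∑ i' : Fin n, a i'.succ := Fin.sum_univ_succ a
    have hsucc_b : ∑ i, b i = b 0 + ∑ i' : Fin n, b i'.succ := Fin.sum_univ_succ b
    have hsplit_a : ∑ i' : Fin n, a i'.succ
        = a i0.succ + ∑ i' ∈ Finset.univ.erase i0, a i'.succ :=
      (Finset.add_sum_erase _ _ (Finset.mem_univ i0)).symm
    have hsplit_b : ∑ i' : Fin n, b i'.succ
        = b i0.succ + ∑ i' ∈ Finset.univ.erase i0, b i'.succ :=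
      (Finset.add_sum_erase _ _ (Finset.mem_univ i0)).symm
    have hrest : ∑ i' ∈ Finset.univ.erase i0, b i'.succ
        ≤ ∑ i' ∈ Finset.univ.erase i0, a i'.succ :=
      Finset.sum_le_sum fun i _ => hge i
    have hb0 : b 0 ≤ b i0.succ := hmono (Fin.zero_le _)
    omega
  funext i
  refine Fin.cases ?_ (fun i' => key i') i
  have hsucc_a : ∑ i, a i = a 0 + ∑ i' : Fin n, a i'.succ := Fin.sum_univ_succ a
  have hsucc_b : ∑ i, b i = b 0 + ∑ i' : Fin n, b i'.succ := Fin.sum_univ_succ b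
  have : ∑ i' : Fin n, a i'.succ = ∑ i' : Fin n, b i'.succ :=
    Finset.sum_congr rfl fun i _ => key i
  omega

end AuxSOP

theorem sum_of_powers_decomposition_of_monomial {k : Type*} [Field k] [IsAlgClosed k]
    [CharZero k] {n : ℕ} (b : Fin (n + 1) → ℕ) (hmono : Monotone b) (hb : ∀ i, 1 ≤ b i)
    (d : ℕ) (hd : d = ∑ i, b i)
    (r : ℕ) (hr : r = ∏ i ∈ Finset.univ.erase 0, (b i + 1)) :
    ∃ (ε : Fin r → (Fin (n + 1) → k)) (γ : Fin r → k),
      Function.Injective ε ∧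
      (∀ j, ε j 0 = 1 ∧ ∀ i : Fin (n + 1), i ≠ 0 → (ε j i) ^ (b i + 1) = 1) ∧
      (∏ i, (X i : MvPolynomial (Fin (n + 1)) k) ^ b i) =
        ∑ j, γ j • (∑ i, C (ε j i) * X i) ^ d := by
  classical
  -- primitive roots of unity
  have hprim : ∀ i : Fin (n+1), ∃ ζ : k, IsPrimitiveRoot ζ (b i + 1) := fun i => by
    haveI : NeZero ((b i + 1 : ℕ) : k) := ⟨by exact_mod_cast Nat.succ_ne_zero (b i)⟩
    exact HasEnoughRootsOfUnity.exists_primitiveRoot k (b i + 1)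
  choose ζ hζ using hprim
  -- r as a product over Fin n
  have hr' : r = ∏ i' : Fin n, (b i'.succ + 1) := by
    have h1 : ∏ i, (b i + 1) = (b 0 + 1) * ∏ i ∈ Finset.univ.erase 0, (b i + 1) :=
      (Finset.mul_prod_erase _ _ (Finset.mem_univ 0)).symm
    have h2 : ∏ i, (b i + 1) = (b 0 + 1) * ∏ i' : Fin n, (b i'.succ + 1) :=
      Fin.prod_univ_succ _
    rw [hr]
    exact Nat.eq_of_mul_eq_mul_left (Nat.succ_pos _) (h1.symm.trans h2)
  have hcard : Fintype.card (∀ i' : Fin n, Fin (b i'.succ + 1)) = r := by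
    rw [Fintype.card_pi]
    simp only [Fintype.card_fin]
    exact hr'.symm
  set T := ∀ i' : Fin n, Fin (b i'.succ + 1) with hT
  let e : Fin r ≃ T := (Fintype.equivFinOfCardEq hcard).symm
  let E : T → (Fin (n+1) → k) :=
    fun t i => Fin.cases 1 (fun i' => ζ i'.succ ^ (t i' : ℕ)) i
  have hE0 : ∀ t, E t 0 = 1 := fun t => rfl
  have hEsucc : ∀ t (i' : Fin n), E t i'.succ = ζ i'.succ ^ (t i' : ℕ) := fun t i' => by
    simp [E]
  -- the constant
  set c : k := ((r : k) * (Nat.multinomial Finset.univ b : k))⁻¹ with hc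
  refine ⟨fun j => E (e j), fun j => c * ∏ i' : Fin n, E (e j) i'.succ, ?_, ?_, ?_⟩
  · -- injectivity
    have hEinj : Function.Injective E := by
      intro t t' h
      funext i'
      have h2 := congrFun h i'.succ
      rw [hEsucc, hEsucc] at h2
      exact Fin.ext ((hζ i'.succ).pow_inj (t i').is_lt (t' i').is_lt h2)
    exact hEinj.comp e.injective
  · -- roots of unity
    intro j
    refine ⟨hE0 _, fun i hi => ?_⟩
    obtain ⟨i', rfl⟩ := Fin.exists_succ_eq.mpr hi
    show (E (e j) i'.succ) ^ (b i'.succ + 1) = 1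
    rw [hEsucc, ← pow_mul, mul_comm, pow_mul, (hζ i'.succ).pow_eq_one, one_pow]
  · -- the main identity
    have hkey : ∀ t : T, (c * ∏ i' : Fin n, E t i'.succ) • (∑ i, C (E t i) * X i) ^ d
        = ∑ a ∈ Finset.piAntidiag (Finset.univ : Finset (Fin (n+1))) d,
            C (c * (Nat.multinomial Finset.univ a : k)
                * ∏ i' : Fin n, ζ i'.succ ^ ((t i' : ℕ) * (a i'.succ + 1)))
              * ∏ i, X i ^ a i := by
      intro t
      rw [Finset.sum_pow_eq_sum_piAntidiag, Finset.smul_sum]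
      refine Finset.sum_congr rfl fun a ha => ?_
      have h1 : ∏ i, (C (E t i) * X i) ^ a i
          = C (∏ i, E t i ^ a i) * ∏ i, X i ^ a i := by
        simp_rw [mul_pow, ← C_pow]
        rw [Finset.prod_mul_distrib, ← map_prod]
      have h2 : ((Nat.multinomial Finset.univ a : ℕ) : MvPolynomial (Fin (n+1)) k)
          = C ((Nat.multinomial Finset.univ a : k)) := (map_natCast C _).symm
      rw [h1, h2, smul_eq_C_mul, ← mul_assoc, ← mul_assoc, ← map_mul, ← map_mul]
      congr 2
      have h3 : (∏ i' : Fin n, E t i'.succ) * ∏ i, E t i ^ a i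
          = ∏ i' : Fin n, ζ i'.succ ^ ((t i' : ℕ) * (a i'.succ + 1)) := by
        rw [Fin.prod_univ_succ (fun i => E t i ^ a i), hE0, one_pow, one_mul,
          ← Finset.prod_mul_distrib]
        refine Finset.prod_congr rfl fun i' _ => ?_
        rw [hEsucc, ← pow_succ', ← pow_mul]
      linear_combination (c * (Nat.multinomial Finset.univ a : k)) * h3
    have hS : ∀ (sv : Fin n → ℕ), ∑ t : T, ∏ i' : Fin n, ζ i'.succ ^ ((t i' : ℕ) * sv i')
        = ∏ i' : Fin n, (if (b i'.succ + 1) ∣ sv i' then ((b i'.succ + 1 : ℕ) : k) else 0) := by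
      intro sv
      have hc' : ∀ (t : T) (i' : Fin n),
          ζ i'.succ ^ ((t i' : ℕ) * sv i') = (ζ i'.succ ^ sv i') ^ (t i' : ℕ) := by
        intro t i'; rw [mul_comm, pow_mul]
      simp_rw [hc']
      rw [← Fintype.piFinset_univ,
        ← Finset.prod_univ_sum (fun i' : Fin n => (Finset.univ : Finset (Fin (b i'.succ + 1))))
          (fun i' y => (ζ i'.succ ^ sv i') ^ (y : ℕ))]
      refine Finset.prod_congr rfl fun i' _ => ?_
      rw [Fin.sum_univ_eq_sum_range (fun x => (ζ i'.succ ^ sv i') ^ x) (b i'.succ + 1)]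
      exact aux_geom (hζ i'.succ) (sv i')
    have hprod_ite : ∀ a : Fin (n+1) → ℕ,
        (∏ i' : Fin n, if (b i'.succ + 1) ∣ (a i'.succ + 1)
            then ((b i'.succ + 1 : ℕ) : k) else 0)
        = if (∀ i' : Fin n, (b i'.succ + 1) ∣ (a i'.succ + 1)) then (r : k) else 0 := by
      intro a
      by_cases hD : ∀ i' : Fin n, (b i'.succ + 1) ∣ (a i'.succ + 1)
      · rw [if_pos hD, Finset.prod_congr rfl fun i' _ => if_pos (hD i'), hr']
        push_cast
        ring
      · rw [if_neg hD]
        push_neg at hD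
        obtain ⟨i0, hi0⟩ := hD
        exact Finset.prod_eq_zero (Finset.mem_univ i0) (if_neg hi0)
    have hmemb : b ∈ Finset.piAntidiag (Finset.univ : Finset (Fin (n+1))) d :=
      Finset.mem_piAntidiag.mpr ⟨hd.symm, fun i _ => Finset.mem_univ i⟩
    have main : ∑ j : Fin r, (c * ∏ i' : Fin n, E (e j) i'.succ)
          • (∑ i, C (E (e j) i) * X i) ^ d
        = ∏ i, (X i : MvPolynomial (Fin (n+1)) k) ^ b i := by
      rw [Equiv.sum_comp e
        (fun t => (c * ∏ i' : Fin n, E t i'.succ) • (∑ i, C (E t i) * X i) ^ d)]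
      calc ∑ t : T, (c * ∏ i' : Fin n, E t i'.succ) • (∑ i, C (E t i) * X i) ^ d
          = ∑ t : T, ∑ a ∈ Finset.piAntidiag (Finset.univ : Finset (Fin (n+1))) d,
              C (c * (Nat.multinomial Finset.univ a : k)
                * ∏ i' : Fin n, ζ i'.succ ^ ((t i' : ℕ) * (a i'.succ + 1)))
              * ∏ i, X i ^ a i := Finset.sum_congr rfl fun t _ => hkey t
        _ = ∑ a ∈ Finset.piAntidiag (Finset.univ : Finset (Fin (n+1))) d, ∑ t : T,
              C (c * (Nat.multinomial Finset.univ a : k)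
                * ∏ i' : Fin n, ζ i'.succ ^ ((t i' : ℕ) * (a i'.succ + 1)))
              * ∏ i, X i ^ a i := Finset.sum_comm
        _ = ∑ a ∈ Finset.piAntidiag (Finset.univ : Finset (Fin (n+1))) d,
              C (c * (Nat.multinomial Finset.univ a : k)
                * (if (∀ i' : Fin n, (b i'.succ + 1) ∣ (a i'.succ + 1)) then (r : k) else 0))
              * ∏ i, X i ^ a i := by
            refine Finset.sum_congr rfl fun a ha => ?_
            rw [← Finset.sum_mul, ← map_sum, ← Finset.mul_sum,
              hS (fun i' => a i'.succ + 1), hprod_ite a]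
        _ = ∏ i, (X i : MvPolynomial (Fin (n+1)) k) ^ b i := by
            have hzero : ∀ a ∈ Finset.piAntidiag (Finset.univ : Finset (Fin (n+1))) d,
                a ≠ b → (C (c * (Nat.multinomial Finset.univ a : k)
                  * (if (∀ i' : Fin n, (b i'.succ + 1) ∣ (a i'.succ + 1)) then (r : k) else 0))
                  * ∏ i, (X i : MvPolynomial (Fin (n+1)) k) ^ a i) = 0 := by
              intro a ha hne
              have hsa : ∑ i, a i = ∑ i, b i :=
                ((Finset.mem_piAntidiag.mp ha).1).trans hd
              have hDa : ¬ (∀ i' : Fin n, (b i'.succ + 1) ∣ (a i'.succ + 1)) :=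
                fun hD => hne (aux_comb b hmono a hsa hD)
              rw [if_neg hDa, mul_zero, map_zero, zero_mul]
            rw [Finset.sum_eq_single_of_mem b hmemb hzero]
            rw [if_pos (fun i' => dvd_refl _)]
            have hrne : (r : k) ≠ 0 := Nat.cast_ne_zero.mpr
              (by rw [hr']; exact Finset.prod_ne_zero_iff.mpr fun i' _ => Nat.succ_ne_zero _)
            have hmne : ((Nat.multinomial Finset.univ b : ℕ) : k) ≠ 0 :=
              Nat.cast_ne_zero.mpr (Nat.multinomial_pos _ _).ne'
            have hone : c * (Nat.multinomial Finset.univ b : k) * (r : k) = 1 := by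
              rw [hc]
              field_simp
            rw [hone, map_one, one_mul]
    exact main.symm
end
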